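/- arXiv:1811.12547 — 2 statements merged into one kernel-verified Lean document; each statement's English description precedes it below -/
import Mathlib

section
/- Let v be a vertex of T with two children v_1 and v_2. Then A(v) = ℝ_{>0} ∩ (A'(v_1) ∩ A'(v_2)) if i(v) = i(v_1) = i(v_2); A(v) = ℝ_{>0} ∩ (A'(v_1) ∩ C'(v_2)) if i(v) = i(v_1) ≠ i(v_2); A(v) = ℝ_{>0} ∩ (A'(v_2) ∩ C'(v_1)) if i(v) = i(v_2) ≠ i(v_1); and A(v) = ℝ_{>0} ∩ (C'(v_1) ∩ C'(v_2)) if i(v) ≠ i(v_1) and i(v) ≠ i(v_2). -/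
/-- The vertex set of the subtree of `T` (rooted at `r`) rooted at `v`: those vertices `u`
such that `v` lies on the (unique) path in `T` from `r` to `u`. -/
def descend {V : Type*} (T : SimpleGraph V) (r v : V) : Set V :=
  {u | ∀ p : T.Walk r u, p.IsPath → v ∈ p.support}

/-- `J(v)`: the indices of cells meeting the subtree rooted at `v`. -/
def Jset {V : Type*} (T : SimpleGraph V) (r : V) {k : ℕ} (U : Fin k → Set V) (v : V) :
    Set (Fin k) :=
  {j | (U j ∩ descend T r v).Nonempty}

/-- `B(v)`: the set of distances `d(s_{i(v)}, v)` over all placements `(s_j)_{j ∈ J(v)}`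
of the sites inside the subtree `T(v)` realizing the cells `U_j ∩ T(v)` there. -/
def Bset {V : Type*} (T : SimpleGraph V) (r : V) (d : V → V → ℝ) {k : ℕ}
    (U S : Fin k → Set V) (iv : V → Fin k) (v : V) : Set ℝ :=
  {x | ∃ st : Fin k → V,
    (∀ j ∈ Jset T r U v, st j ∈ S j ∩ descend T r v) ∧
    (∀ j ∈ Jset T r U v,
      {u | u ∈ descend T r v ∧ ∀ t ∈ Jset T r U v, d (st j) u ≤ d (st t) u} =
        U j ∩ descend T r v) ∧
    x = d (st (iv v)) v}

/-- `A(v)`: the set of `α > 0` such that, placing the site of the cell of `v` on a new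
vertex `v_new` attached to `v` by an edge of length `α` (so at distance `α + d(v,u)` from
every `u ∈ T(v)`), the remaining sites can be placed with `s_j ∈ S_j` so that the Voronoi
cells within the subtree `T(v)` of the extended tree `T⁺_α(v)` are the `U_j ∩ T(v)`. -/
def Aset {V : Type*} (T : SimpleGraph V) (r : V) (d : V → V → ℝ) {k : ℕ}
    (U S : Fin k → Set V) (iv : V → Fin k) (v : V) : Set ℝ :=
  {α | 0 < α ∧ ∃ st : Fin k → V,
    (∀ j ∈ Jset T r U v, j ≠ iv v → st j ∈ S j) ∧
    (∀ j ∈ Jset T r U v, j ≠ iv v →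
      {u | u ∈ descend T r v ∧ (∀ t ∈ Jset T r U v, t ≠ iv v → d (st j) u ≤ d (st t) u) ∧
          d (st j) u ≤ α + d v u} = U j ∩ descend T r v) ∧
    {u | u ∈ descend T r v ∧ ∀ t ∈ Jset T r U v, t ≠ iv v → α + d v u ≤ d (st t) u} =
      U (iv v) ∩ descend T r v}

/-- `A'(c) = {x − λ(vc) : x ∈ A(c)}`, for a child `c` of `v`. -/
def Ashift {V : Type*} (T : SimpleGraph V) (r : V) (w : Sym2 V → ℝ) (d : V → V → ℝ)
    {k : ℕ} (U S : Fin k → Set V) (iv : V → Fin k) (v c : V) : Set ℝ :=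
  {x | ∃ y ∈ Aset T r d U S iv c, x = y - w s(v, c)}

/-- `B'(c) = {x + λ(vc) : x ∈ B(c)}`, for a child `c` of `v`. -/
def Bshift {V : Type*} (T : SimpleGraph V) (r : V) (w : Sym2 V → ℝ) (d : V → V → ℝ)
    {k : ℕ} (U S : Fin k → Set V) (iv : V → Fin k) (v c : V) : Set ℝ :=
  {x | ∃ y ∈ Bset T r d U S iv c, x = y + w s(v, c)}

/-- `C'(c) = ⋃_{x ∈ B(c)} (x − λ(vc), x + λ(vc))`, for a child `c` of `v`. -/
def Cshift {V : Type*} (T : SimpleGraph V) (r : V) (w : Sym2 V → ℝ) (d : V → V → ℝ)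
    {k : ℕ} (U S : Fin k → Set V) (iv : V → Fin k) (v c : V) : Set ℝ :=
  {α | ∃ y ∈ Bset T r d U S iv c, y - w s(v, c) < α ∧ α < y + w s(v, c)}



open SimpleGraph Walk

namespace VorAux

variable {V : Type*} {T : SimpleGraph V}

/-- the canonical path in a tree -/
noncomputable def thePath (hT : T.IsTree) (a b : V) : T.Walk a b :=
  (hT.existsUnique_path a b).exists.choose

lemma thePath_isPath (hT : T.IsTree) (a b : V) : (thePath hT a b).IsPath :=
  (hT.existsUnique_path a b).exists.choose_spec

lemma thePath_unique (hT : T.IsTree) {a b : V} {p : T.Walk a b} (hp : p.IsPath) :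
    p = thePath hT a b :=
  ((hT.existsUnique_path a b).unique hp (thePath_isPath hT a b))

lemma mem_descend_iff (hT : T.IsTree) {r u x : V} :
    u ∈ descend T r x ↔ x ∈ (thePath hT r u).support := by
  constructor
  · intro h; exact h _ (thePath_isPath hT r u)
  · intro h p hp
    rw [thePath_unique hT hp]; exact h

lemma self_mem_descend (T : SimpleGraph V) (r x : V) : x ∈ descend T r x :=
  fun p _ => p.end_mem_support

end VorAux

namespace VorAux

section Dist
variable {V : Type*} [DecidableEq V] {T : SimpleGraph V} (hT : T.IsTree)
  {w : Sym2 V → ℝ} (hw : ∀ e ∈ T.edgeSet, 0 < w e)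
  {d : V → V → ℝ} (hd : ∀ (u v : V) (p : T.Walk u v), p.IsPath → (p.edges.map w).sum = d u v)

include hT hd

omit hT in
lemma d_self (a : V) : d a a = 0 := by
  have := hd a a Walk.nil Walk.IsPath.nil
  simpa using this.symm

lemma d_symm (a b : V) : d a b = d b a := by
  rw [← hd a b _ (thePath_isPath hT a b),
      ← hd b a _ ((thePath_isPath hT a b).reverse)]
  simp [Walk.edges_reverse, List.map_reverse, List.sum_reverse]

omit hT in
lemma d_split {a b x : V} {p : T.Walk a b} (hp : p.IsPath) (hx : x ∈ p.support) :
    d a b = d a x + d x b := by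
  rw [← hd a b p hp, ← hd a x _ (hp.takeUntil hx), ← hd x b _ (hp.dropUntil hx)]
  conv_lhs => rw [← Walk.take_spec p hx]
  rw [Walk.edges_append, List.map_append, List.sum_append]

include hw

lemma d_nonneg (a b : V) : 0 ≤ d a b := by
  rw [← hd a b _ (thePath_isPath hT a b)]
  apply List.sum_nonneg
  intro x hx
  simp only [List.mem_map] at hx
  obtain ⟨e, he, rfl⟩ := hx
  exact (hw e ((thePath hT a b).edges_subset_edgeSet he)).le

lemma d_adj_le {a a' b : V} (h : T.Adj a a') : d a b ≤ w s(a, a') + d a' b := by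
  by_cases hmem : a ∈ (thePath hT a' b).support
  · have h1 : d a' b = d a' a + d a b := d_split hd (thePath_isPath hT a' b) hmem
    have h2 : 0 ≤ d a' a := d_nonneg hT hw hd a' a
    have h3 : 0 < w s(a, a') := hw _ h
    linarith
  · have hp : (Walk.cons h (thePath hT a' b)).IsPath :=
      (thePath_isPath hT a' b).cons hmem
    have := hd _ _ _ hp
    rw [← hd _ _ _ (thePath_isPath hT a' b)]
    simp only [Walk.edges_cons, List.map_cons, List.sum_cons] at this
    linarith [this.le]

lemma d_le_walk {a b : V} (p : T.Walk a b) : d a b ≤ (p.edges.map w).sum := by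
  induction p with
  | nil => simp [d_self hd]
  | @cons a c b h q ih =>
    simp only [Walk.edges_cons, List.map_cons, List.sum_cons]
    have := d_adj_le hT hw hd (b := b) h
    linarith

lemma d_triangle (a x b : V) : d a b ≤ d a x + d x b := by
  have := d_le_walk hT hw hd ((thePath hT a x).append (thePath hT x b))
  rw [Walk.edges_append, List.map_append, List.sum_append,
      hd _ _ _ (thePath_isPath hT a x), hd _ _ _ (thePath_isPath hT x b)] at this
  exact this

end Dist

end VorAux

namespace VorAux

section Struct
variable {V : Type*} [DecidableEq V] {T : SimpleGraph V} (hT : T.IsTree) (r : V)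

include hT

/-- separation: any walk from inside `descend x` to outside passes through `x`. -/
lemma mem_support_of_descend {x s t : V} (hs : s ∈ descend T r x) (ht : t ∉ descend T r x)
    (p : T.Walk s t) : x ∈ p.support := by
  by_contra hx
  simp only [descend, Set.mem_setOf_eq, not_forall] at ht
  obtain ⟨q, hq, hxq⟩ := ht
  have hb : (q.append p.reverse).bypass.IsPath := Walk.bypass_isPath _
  have hmem : x ∈ (q.append p.reverse).bypass.support := hs _ hb
  have := Walk.support_bypass_subset _ hmem
  rw [Walk.mem_support_append_iff] at this
  rcases this with h | h
  · exact hxq h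
  · rw [Walk.support_reverse, List.mem_reverse] at h
    exact hx h

/-- splitting the distance at a descend-separator. -/
lemma d_split_descend {w : Sym2 V → ℝ} (hw : ∀ e ∈ T.edgeSet, 0 < w e)
    {d : V → V → ℝ} (hd : ∀ (u v : V) (p : T.Walk u v), p.IsPath → (p.edges.map w).sum = d u v)
    {x s t : V} (hs : s ∈ descend T r x) (ht : t ∉ descend T r x) :
    d s t = d s x + d x t :=
  d_split hd (thePath_isPath hT s t)
    (mem_support_of_descend hT r hs ht (thePath hT s t))

end Struct

end VorAux

namespace VorAux

lemma concat_isPath' {V : Type*} {T : SimpleGraph V} {a b c : V} {p : T.Walk a b}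
    (hp : p.IsPath) (h : T.Adj b c) (hc : c ∉ p.support) : (p.concat h).IsPath := by
  rw [← Walk.isPath_reverse_iff, Walk.reverse_concat]
  exact hp.reverse.cons (by rwa [Walk.support_reverse, List.mem_reverse])

lemma walk_exists_cons {V : Type*} {T : SimpleGraph V} {a b : V} (q : T.Walk a b)
    (hne : a ≠ b) : ∃ (c : V) (h : T.Adj a c) (q' : T.Walk c b), q = Walk.cons h q' := by
  cases q with
  | nil => exact absurd rfl hne
  | cons h q' => exact ⟨_, h, q', rfl⟩

section Child
variable {V : Type*} [DecidableEq V] {T : SimpleGraph V} (hT : T.IsTree) (r : V)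
  {v c : V} (hadj : T.Adj v c) (hcd : c ∈ descend T r v)

include hT hadj hcd

lemma child_not_mem_pathRv : c ∉ (thePath hT r v).support := by
  intro hc
  set p := thePath hT r v with hp
  have hnd := (thePath_isPath hT r v).support_nodup
  have hvtake : v ∈ (p.takeUntil c hc).support :=
    hcd _ ((thePath_isPath hT r v).takeUntil hc)
  have hsp : p.support = (p.takeUntil c hc).support ++ (p.dropUntil c hc).support.tail := by
    conv_lhs => rw [← Walk.take_spec p hc]
    exact Walk.support_append _ _
  rw [hsp] at hnd
  have hdisj := List.disjoint_of_nodup_append hnd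
  have hvdrop : v ∈ (p.dropUntil c hc).support := Walk.end_mem_support _
  rw [Walk.support_eq_cons] at hvdrop
  rcases List.mem_cons.mp hvdrop with h | h
  · exact hadj.ne h
  · exact hdisj hvtake h

lemma not_descend_child : v ∉ descend T r c := by
  intro hmem
  exact child_not_mem_pathRv hT r hadj hcd (hmem _ (thePath_isPath hT r v))

lemma thePath_child : thePath hT r c = (thePath hT r v).concat hadj :=
  (thePath_unique hT (concat_isPath' (thePath_isPath hT r v) hadj
    (child_not_mem_pathRv hT r hadj hcd))).symm

lemma descend_child_subset : descend T r c ⊆ descend T r v := by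
  intro u hu p hp
  have hc : c ∈ p.support := hu p hp
  have hvtake : v ∈ (p.takeUntil c hc).support := hcd _ (hp.takeUntil hc)
  exact Walk.support_takeUntil_subset p hc hvtake

lemma descend_step {s s' : V} (hs : s ∈ descend T r c) (h : T.Adj s s') (hs' : s' ≠ v) :
    s' ∈ descend T r c := by
  set p := thePath hT r s with hpdef
  have hcp : c ∈ p.support := hs p (thePath_isPath hT r s)
  by_cases hmem : s' ∈ p.support
  · -- s' is on the path r → s; then the path r → s' is a prefix and p = that path + edge
    have hq : (p.takeUntil s' hmem).IsPath := (thePath_isPath hT r s).takeUntil hmem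
    have hdrop : p.dropUntil s' hmem = Walk.cons h.symm Walk.nil := by
      have h1 : (Walk.cons h.symm Walk.nil : T.Walk s' s).IsPath := by
        simp [Walk.isPath_def, h.ne']
      have h2 := (thePath_isPath hT r s).dropUntil hmem
      rw [thePath_unique hT h2, thePath_unique hT h1]
    have hpeq : p = (p.takeUntil s' hmem).concat h.symm := by
      conv_lhs => rw [← Walk.take_spec p hmem, hdrop]
      rfl
    have hsupp : p.support = (p.takeUntil s' hmem).support ++ [s] := by
      have h3 := congrArg Walk.support hpeq
      rw [Walk.support_concat] at h3
      exact h3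
    rw [hsupp, List.mem_append] at hcp
    rcases hcp with hctake | hcs
    · -- c on the path r → s' : then s' ∈ descend c
      intro q hqp
      rw [thePath_unique hT hq] at hctake
      rw [thePath_unique hT hqp]
      exact hctake
    · -- c = s : the edge goes from c up to its parent, so s' = v, contradiction
      simp only [List.mem_singleton] at hcs
      subst hcs
      exfalso
      have heq : (p.takeUntil s' hmem).concat h.symm =
          (thePath hT r v).concat hadj := by
        rw [← hpeq, hpdef, thePath_child hT r hadj hcd]
      obtain ⟨hv, -⟩ := Walk.concat_inj heq
      exact hs' hv
  · -- s' not on the path r → s : then path r → s' = p + edge, contains c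
    have hpath : (p.concat h).IsPath :=
      concat_isPath' (thePath_isPath hT r s) h hmem
    intro q hqp
    rw [thePath_unique hT hqp, ← thePath_unique hT hpath, Walk.support_concat,
        List.mem_append]
    exact Or.inl hcp

lemma descend_walk_avoid {s t : V} (p : T.Walk s t) (hs : s ∈ descend T r c)
    (hv : v ∉ p.support) : t ∈ descend T r c := by
  induction p with
  | nil => exact hs
  | @cons a a' b h q ih =>
    simp only [Walk.support_cons, List.mem_cons, not_or] at hv
    have ha' : a' ≠ v := fun hh => hv.2 (hh ▸ q.start_mem_support)
    exact ih (descend_step hT r hadj hcd hs h ha') hv.2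

end Child

end VorAux

namespace VorAux

section Pair
variable {V : Type*} [DecidableEq V] {T : SimpleGraph V} (hT : T.IsTree) (r : V)
  {v c c' : V} (hnecc' : c ≠ c')
  (hpair : ∀ x : V, (T.Adj v x ∧ x ∈ descend T r v) ↔ (x = c ∨ x = c'))

include hT hpair

lemma pair_adj : T.Adj v c := ((hpair c).mpr (Or.inl rfl)).1
lemma pair_mem : c ∈ descend T r v := ((hpair c).mpr (Or.inl rfl)).2

include hnecc'

lemma pair_not_descend : c' ∉ descend T r c := by
  intro hmem
  have hP := thePath_child hT r (pair_adj hT r hpair) (pair_mem hT r hpair)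
  have hadj' : T.Adj v c' := ((hpair c').mpr (Or.inr rfl)).1
  have hcd' : c' ∈ descend T r v := ((hpair c').mpr (Or.inr rfl)).2
  have hP' := thePath_child hT r hadj' hcd'
  have hc : c ∈ (thePath hT r c').support := hmem _ (thePath_isPath hT r c')
  rw [hP', Walk.support_concat, List.mem_append] at hc
  rcases hc with hc | hc
  · exact child_not_mem_pathRv hT r (pair_adj hT r hpair) (pair_mem hT r hpair) hc
  · simp only [List.mem_singleton] at hc
    exact hnecc' hc

omit hnecc' in
lemma descend_decomp {u : V} (hu : u ∈ descend T r v) :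
    u = v ∨ u ∈ descend T r c ∨ u ∈ descend T r c' := by
  by_cases huv : u = v
  · exact Or.inl huv
  · right
    set p := thePath hT r u with hpdef
    have hv : v ∈ p.support := (mem_descend_iff hT).mp hu
    obtain ⟨x, h, q', hq⟩ := walk_exists_cons (p.dropUntil v hv) (Ne.symm huv)
    -- x is a child of v and u ∈ descend x
    have hnd := (thePath_isPath hT r u).support_nodup
    have hsp : p.support = (p.takeUntil v hv).support ++ (p.dropUntil v hv).support.tail := by
      conv_lhs => rw [← Walk.take_spec p hv]
      exact Walk.support_append _ _
    rw [hsp] at hnd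
    have hdisj := List.disjoint_of_nodup_append hnd
    have hxtail : x ∈ (p.dropUntil v hv).support.tail := by
      rw [hq]; simpa using q'.start_mem_support
    have hxnottake : x ∉ (p.takeUntil v hv).support := fun hh => hdisj hh hxtail
    have hxpath : ((p.takeUntil v hv).concat h).IsPath :=
      concat_isPath' ((thePath_isPath hT r u).takeUntil hv) h hxnottake
    have hxdesc : x ∈ descend T r v := by
      intro q hqp
      rw [thePath_unique hT hqp, ← thePath_unique hT hxpath]
      rw [Walk.support_concat, List.mem_append]
      exact Or.inl (Walk.end_mem_support _)
    have hudesc : u ∈ descend T r x := by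
      intro q hqp
      rw [thePath_unique hT hqp, ← hpdef]
      have : x ∈ (p.dropUntil v hv).support := by
        rw [hq]; simp
      exact Walk.support_dropUntil_subset p hv this
    rcases (hpair x).mp ⟨h, hxdesc⟩ with rfl | rfl
    · exact Or.inl hudesc
    · exact Or.inr hudesc

end Pair

section PairMetric
variable {V : Type*} [DecidableEq V] {T : SimpleGraph V} (hT : T.IsTree) (r : V)
  {w : Sym2 V → ℝ} (hw : ∀ e ∈ T.edgeSet, 0 < w e)
  {d : V → V → ℝ} (hd : ∀ (u v : V) (p : T.Walk u v), p.IsPath → (p.edges.map w).sum = d u v)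

include hT hw hd

lemma d_pos {a b : V} (hab : a ≠ b) : 0 < d a b := by
  obtain ⟨x, h, q, hq⟩ := walk_exists_cons (thePath hT a b) hab
  rw [← hd a b _ (thePath_isPath hT a b), hq]
  simp only [Walk.edges_cons, List.map_cons, List.sum_cons]
  have h1 : 0 < w s(a, x) := hw _ h
  have h2 : 0 ≤ (q.edges.map w).sum := by
    apply List.sum_nonneg
    intro y hy
    simp only [List.mem_map] at hy
    obtain ⟨e, he, rfl⟩ := hy
    exact (hw e (q.edges_subset_edgeSet he)).le
  linarith

lemma d_adj {a b : V} (h : T.Adj a b) : d a b = w s(a, b) := by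
  have hpath : (Walk.cons h Walk.nil : T.Walk a b).IsPath := by
    simp [Walk.isPath_def, h.ne]
  have := hd _ _ _ hpath
  simpa using this.symm

variable {v c c' : V} (hnecc' : c ≠ c')
  (hpair : ∀ x : V, (T.Adj v x ∧ x ∈ descend T r v) ↔ (x = c ∨ x = c'))

include hpair

/-- distance from `v` into the subtree of child `c`. -/
lemma d_into {u : V} (hu : u ∈ descend T r c) : d v u = w s(v, c) + d c u := by
  have hadj := pair_adj hT r hpair
  have hcd := pair_mem hT r hpair
  have hvc : v ∉ descend T r c := not_descend_child hT r hadj hcd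
  have h1 : d u v = d u c + d c v :=
    d_split_descend hT r hw hd hu hvc
  have h2 : d c v = w s(v, c) := by
    rw [d_adj hT hw hd hadj.symm, Sym2.eq_swap]
  rw [d_symm hT hd v u, h1, h2, d_symm hT hd u c]
  ring

/-- distance from a vertex of the subtree of `c` to a vertex outside it. -/
lemma d_out {s u : V} (hs : s ∈ descend T r c) (hu : u ∉ descend T r c) :
    d s u = d s c + d c u :=
  d_split_descend hT r hw hd hs hu

include hnecc'

lemma descend_pair_disjoint {u : V} (hu : u ∈ descend T r c) (hu' : u ∈ descend T r c') :
    False := by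
  have h1 : d u c' = d u c + d c c' :=
    d_out hT r hw hd hpair hu (pair_not_descend hT r hnecc' hpair)
  have hpair' : ∀ x : V, (T.Adj v x ∧ x ∈ descend T r v) ↔ (x = c' ∨ x = c) := by
    intro x; rw [hpair x]; tauto
  have h2 : d u c = d u c' + d c' c :=
    d_out hT r hw hd hpair' hu' (pair_not_descend hT r (Ne.symm hnecc') hpair')
  have h3 : 0 < d c c' := d_pos hT hw hd hnecc'
  have h4 : 0 < d c' c := d_pos hT hw hd (Ne.symm hnecc')
  linarith

/-- cross-subtree distances go through `v`. -/
lemma d_cross {s u : V} (hs : s ∈ descend T r c') (hu : u = v ∨ u ∈ descend T r c) :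
    d s u = d s v + d v u := by
  have hadj := pair_adj hT r hpair
  have hcd := pair_mem hT r hpair
  have hadj' : T.Adj v c' := ((hpair c').mpr (Or.inr rfl)).1
  have hcd' : c' ∈ descend T r v := ((hpair c').mpr (Or.inr rfl)).2
  have hsv : d s v = d s c' + w s(v, c') := by
    rw [d_out hT r hw hd ?pp hs (not_descend_child hT r hadj' hcd'),
        d_symm hT hd c' v, d_adj hT hw hd hadj']
    case pp => intro x; rw [hpair x]; tauto
  rcases hu with rfl | hu
  · rw [hsv, d_self hd]; ring
  · have hucnot : u ∉ descend T r c' := fun hh =>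
      descend_pair_disjoint hT r hw hd hnecc' hpair hu hh
    have h1 : d s u = d s c' + d c' u := by
      apply d_out hT r hw hd ?pp2 hs hucnot
      case pp2 => intro x; rw [hpair x]; tauto
    have h2 : d c' u = d u c + d c c' := by
      rw [d_symm hT hd c' u]
      exact d_out hT r hw hd hpair hu (pair_not_descend hT r hnecc' hpair)
    have h3 : d c c' = w s(v, c) + w s(v, c') := by
      have hpath : (Walk.cons hadj.symm (Walk.cons hadj' Walk.nil) : T.Walk c c').IsPath := by
        simp [Walk.isPath_def, hadj.ne', hadj'.ne, hnecc']
      have := hd _ _ _ hpath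
      simp only [Walk.edges_cons, Walk.edges_nil, List.map_cons, List.map_nil,
        List.sum_cons, List.sum_nil] at this
      rw [← this, Sym2.eq_swap (a := c) (b := v)]
      ring
    have h4 : d v u = w s(v, c) + d c u := d_into hT r hw hd hpair hu
    rw [h1, h2, h3, hsv, h4, d_symm hT hd u c]
    ring

end PairMetric

end VorAux

namespace VorAux

section JU
variable {V : Type*} [DecidableEq V] {T : SimpleGraph V} (hT : T.IsTree) (r : V)
  {w : Sym2 V → ℝ} (hw : ∀ e ∈ T.edgeSet, 0 < w e)
  {d : V → V → ℝ} (hd : ∀ (u v : V) (p : T.Walk u v), p.IsPath → (p.edges.map w).sum = d u v)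
  {k : ℕ} {U S : Fin k → Set V} (hdisj : ∀ i j, i ≠ j → Disjoint (U i) (U j))
  (hUconn : ∀ i, (T.induce (U i)).Connected) (hSU : ∀ i, S i ⊆ U i)
  {iv : V → Fin k} (hiv : ∀ u, u ∈ U (iv u))
  {v c c' : V} (hnecc' : c ≠ c')
  (hpair : ∀ x : V, (T.Adj v x ∧ x ∈ descend T r v) ↔ (x = c ∨ x = c'))

include hdisj hiv in
lemma eq_iv {j : Fin k} {u : V} (h : u ∈ U j) : j = iv u := by
  by_contra hne
  exact Set.disjoint_left.mp (hdisj j (iv u) hne) h (hiv u)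

include hT hUconn in
/-- a connected set having a vertex in `descend c` and avoiding `v` lies in `descend c`. -/
lemma U_subset_descend {j : Fin k} {a : V} (hadj : T.Adj v c) (hcd : c ∈ descend T r v)
    (hvU : v ∉ U j) (haU : a ∈ U j) (had : a ∈ descend T r c) : U j ⊆ descend T r c := by
  intro b hb
  obtain ⟨W⟩ := (hUconn j).preconnected ⟨a, haU⟩ ⟨b, hb⟩
  refine descend_walk_avoid hT r hadj hcd
    (W.map (SimpleGraph.Embedding.induce (U j)).toHom) had ?_
  intro hv
  have hv : v ∈ (W.map (SimpleGraph.Embedding.induce (U j)).toHom).support := hv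
  rw [Walk.support_map, List.mem_map] at hv
  obtain ⟨x, -, hx⟩ := hv
  exact hvU (hx ▸ x.2)

include hT hdisj hUconn hiv hpair in
lemma U_loc {j : Fin k} (hj : j ∈ Jset T r U c) (hjne : j ≠ iv v) :
    U j ⊆ descend T r c := by
  obtain ⟨a, haU, had⟩ := hj
  refine U_subset_descend hT r hUconn (pair_adj hT r hpair) (pair_mem hT r hpair)
    (fun hvU => hjne (eq_iv hdisj hiv hvU)) haU had

include hT hdisj hUconn hiv hpair in
/-- if the cell of `v` meets the subtree of `c` then `c` belongs to it. -/
lemma ivv_mem_J_child (hj : iv v ∈ Jset T r U c) : iv c = iv v := by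
  obtain ⟨a, haU, had⟩ := hj
  obtain ⟨W⟩ := (hUconn (iv v)).preconnected ⟨a, haU⟩ ⟨v, hiv v⟩
  have hvnot : v ∉ descend T r c :=
    not_descend_child hT r (pair_adj hT r hpair) (pair_mem hT r hpair)
  have hcW : c ∈ (W.map (SimpleGraph.Embedding.induce (U (iv v))).toHom).support :=
    mem_support_of_descend hT r had hvnot _
  rw [Walk.support_map, List.mem_map] at hcW
  obtain ⟨x, -, hx⟩ := hcW
  exact (eq_iv hdisj hiv (hx ▸ x.2)).symm

lemma ivu_mem_J {u : V} (hu : u ∈ descend T r c) (hiv : ∀ u, u ∈ U (iv u)) :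
    iv u ∈ Jset T r U c := ⟨u, hiv u, hu⟩

lemma ivc_mem_J (hiv : ∀ u, u ∈ U (iv u)) : iv c ∈ Jset T r U c :=
  ⟨c, hiv c, self_mem_descend T r c⟩

include hT hpair in
lemma J_child_subset : Jset T r U c ⊆ Jset T r U v := by
  rintro j ⟨u, h1, h2⟩
  exact ⟨u, h1, descend_child_subset hT r (pair_adj hT r hpair) (pair_mem hT r hpair) h2⟩

include hT hdisj hiv hpair in
lemma J_decomp {j : Fin k} (hj : j ∈ Jset T r U v) (hjne : j ≠ iv v) :
    j ∈ Jset T r U c ∨ j ∈ Jset T r U c' := by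
  obtain ⟨u, h1, h2⟩ := hj
  rcases descend_decomp hT r hpair h2 with rfl | hu | hu
  · exact absurd (eq_iv hdisj hiv h1) hjne
  · exact Or.inl ⟨u, h1, hu⟩
  · exact Or.inr ⟨u, h1, hu⟩

include hT hw hd hdisj hUconn hiv hnecc' hpair in
lemma J_pair_disjoint {j : Fin k} (hj : j ∈ Jset T r U c) (hj' : j ∈ Jset T r U c')
    (hjne : j ≠ iv v) : False := by
  obtain ⟨u, h1, h2⟩ := hj
  have hpair' : ∀ x : V, (T.Adj v x ∧ x ∈ descend T r v) ↔ (x = c' ∨ x = c) := by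
    intro x; rw [hpair x]; tauto
  have h3 : u ∈ descend T r c' := U_loc hT r hdisj hUconn hiv hpair' hj' hjne h1
  exact descend_pair_disjoint hT r hw hd hnecc' hpair h2 h3

end JU

end VorAux

namespace VorAux

/-- interface for a child's contribution to a placement at `v` with parameter `α`. -/
def Good {V : Type*} (T : SimpleGraph V) (r : V) (d : V → V → ℝ) {k : ℕ}
    (U S : Fin k → Set V) (iv : V → Fin k) (v c : V) (α : ℝ) (stc : Fin k → V) : Prop :=
  (∀ j ∈ Jset T r U c, j ≠ iv v → stc j ∈ S j) ∧
  (∀ j ∈ Jset T r U c, j ≠ iv v →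
    {u | u ∈ descend T r c ∧ (∀ t ∈ Jset T r U c, t ≠ iv v → d (stc j) u ≤ d (stc t) u) ∧
      d (stc j) u ≤ α + d v u} = U j ∩ descend T r c) ∧
  ({u | u ∈ descend T r c ∧ ∀ t ∈ Jset T r U c, t ≠ iv v → α + d v u ≤ d (stc t) u}
    = U (iv v) ∩ descend T r c) ∧
  (∀ t ∈ Jset T r U c, t ≠ iv v → α < d (stc t) v)

section Main
variable {V : Type*} [DecidableEq V] {T : SimpleGraph V} (hT : T.IsTree) (r : V)
  {w : Sym2 V → ℝ} (hw : ∀ e ∈ T.edgeSet, 0 < w e)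
  {d : V → V → ℝ} (hd : ∀ (u v : V) (p : T.Walk u v), p.IsPath → (p.edges.map w).sum = d u v)
  {k : ℕ} {U S : Fin k → Set V} (hdisj : ∀ i j, i ≠ j → Disjoint (U i) (U j))
  (hUconn : ∀ i, (T.induce (U i)).Connected) (hSU : ∀ i, S i ⊆ U i)
  {iv : V → Fin k} (hiv : ∀ u, u ∈ U (iv u))
  {v c c' : V} (hnecc' : c ≠ c')
  (hpair : ∀ x : V, (T.Adj v x ∧ x ∈ descend T r v) ↔ (x = c ∨ x = c'))

include hT hw hd hdisj hUconn hSU hiv hnecc' hpair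

lemma good_of_A {α : ℝ} (hivc : iv c = iv v)
    (hA : (α + w s(v, c)) ∈ Aset T r d U S iv c) :
    ∃ stc, Good T r d U S iv v c α stc := by
  obtain ⟨hpos, stc, hsites, hcells, hlast⟩ := hA
  have hwc : 0 < w s(v, c) :=
    hw _ (T.mem_edgeSet.mpr (pair_adj hT r hpair))
  have hdvu : ∀ u ∈ descend T r c, d v u = w s(v, c) + d c u :=
    fun u hu => d_into hT r hw hd hpair hu
  refine ⟨stc, ?_, ?_, ?_, ?_⟩
  · intro j hj hjne
    exact hsites j hj (hivc ▸ hjne)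
  · intro j hj hjne
    rw [← hcells j hj (hivc ▸ hjne)]
    ext u
    simp only [Set.mem_setOf_eq, hivc]
    constructor
    · rintro ⟨h1, h2, h3⟩
      exact ⟨h1, h2, by rw [hdvu u h1] at h3; linarith⟩
    · rintro ⟨h1, h2, h3⟩
      exact ⟨h1, h2, by rw [hdvu u h1]; linarith⟩
  · rw [← hivc, ← hlast]
    ext u
    simp only [Set.mem_setOf_eq, hivc]
    constructor
    · rintro ⟨h1, h2⟩
      refine ⟨h1, fun t ht htne => ?_⟩
      have := h2 t ht htne
      rw [hdvu u h1] at this; linarith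
    · rintro ⟨h1, h2⟩
      refine ⟨h1, fun t ht htne => ?_⟩
      have := h2 t ht htne
      rw [hdvu u h1]; linarith
  · intro t ht htne
    have hcmem : c ∈ U (iv c) ∩ descend T r c :=
      ⟨hiv c, self_mem_descend T r c⟩
    rw [← hlast] at hcmem
    obtain ⟨-, h2⟩ := hcmem
    have h3 := h2 t ht (hivc ▸ htne)
    rw [d_self hd] at h3
    have hst : stc t ∈ descend T r c :=
      U_loc hT r hdisj hUconn hiv hpair ht htne (hSU t (hsites t ht (hivc ▸ htne)))
    have h4 : d (stc t) v = d (stc t) c + d c v :=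
      d_out hT r hw hd hpair hst
        (not_descend_child hT r (pair_adj hT r hpair) (pair_mem hT r hpair))
    have h5 : d c v = w s(v, c) := by
      rw [d_adj hT hw hd (pair_adj hT r hpair).symm, Sym2.eq_swap]
    linarith

lemma good_of_B {α y : ℝ} (hivc : iv c ≠ iv v) (hα : 0 < α)
    (hy : y ∈ Bset T r d U S iv c)
    (h1 : y - w s(v, c) < α) (h2 : α < y + w s(v, c)) :
    ∃ stc, Good T r d U S iv v c α stc := by
  obtain ⟨stc, hsites, hcells, hyeq⟩ := hy
  have hwc : 0 < w s(v, c) :=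
    hw _ (T.mem_edgeSet.mpr (pair_adj hT r hpair))
  have hdvu : ∀ u ∈ descend T r c, d v u = w s(v, c) + d c u :=
    fun u hu => d_into hT r hw hd hpair hu
  have hivvJ : iv v ∉ Jset T r U c :=
    fun hmem => hivc (ivv_mem_J_child hT r hdisj hUconn hiv hpair hmem)
  -- the site of `iv c` is at distance `y` from `c`, and every local site is ≥ y from c
  have hykey : ∀ t ∈ Jset T r U c, y ≤ d (stc t) c := by
    intro t ht
    have hcmem : c ∈ U (iv c) ∩ descend T r c := ⟨hiv c, self_mem_descend T r c⟩
    rw [← hcells (iv c) (ivc_mem_J r hiv)] at hcmem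
    rw [hyeq]
    exact hcmem.2 t ht
  refine ⟨stc, ?_, ?_, ?_, ?_⟩
  · intro j hj hjne
    exact (hsites j hj).1
  · intro j hj hjne
    rw [← hcells j hj]
    ext u
    simp only [Set.mem_setOf_eq]
    constructor
    · rintro ⟨hu1, hu2, -⟩
      refine ⟨hu1, fun t ht => hu2 t ht (fun hh => hivvJ (hh ▸ ht))⟩
    · rintro ⟨hu1, hu2⟩
      refine ⟨hu1, fun t ht _ => hu2 t ht, ?_⟩
      have h3 : d (stc j) u ≤ d (stc (iv c)) u := hu2 (iv c) (ivc_mem_J r hiv)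
      have h4 : d (stc (iv c)) u ≤ d (stc (iv c)) c + d c u :=
        d_triangle hT hw hd _ _ _
      rw [hdvu u hu1]
      rw [hyeq] at h2
      linarith
  · have hR : U (iv v) ∩ descend T r c = ∅ := by
      rw [Set.eq_empty_iff_forall_notMem]
      rintro u ⟨huU, hud⟩
      exact hivvJ ⟨u, huU, hud⟩
    rw [hR, Set.eq_empty_iff_forall_notMem]
    rintro u ⟨hud, hall⟩
    have hju : iv u ∈ Jset T r U c := ⟨u, hiv u, hud⟩
    have humem : u ∈ U (iv u) ∩ descend T r c := ⟨hiv u, hud⟩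
    rw [← hcells (iv u) hju] at humem
    have h3 : d (stc (iv u)) u ≤ d (stc (iv c)) u := humem.2 (iv c) (ivc_mem_J r hiv)
    have h4 : d (stc (iv c)) u ≤ d (stc (iv c)) c + d c u :=
      d_triangle hT hw hd _ _ _
    have h5 := hall (iv u) hju (fun hh => hivvJ (hh ▸ hju))
    rw [hdvu u hud] at h5
    rw [hyeq] at h2
    linarith
  · intro t ht htne
    have hst : stc t ∈ descend T r c := (hsites t ht).2
    have h4 : d (stc t) v = d (stc t) c + d c v :=
      d_out hT r hw hd hpair hst
        (not_descend_child hT r (pair_adj hT r hpair) (pair_mem hT r hpair))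
    have h5 : d c v = w s(v, c) := by
      rw [d_adj hT hw hd (pair_adj hT r hpair).symm, Sym2.eq_swap]
    have h6 := hykey t ht
    linarith

/-- Forward direction, case `iv c = iv v`. -/
lemma fwd_A {α : ℝ} (hivc : iv c = iv v) (hA : α ∈ Aset T r d U S iv v) :
    (α + w s(v, c)) ∈ Aset T r d U S iv c := by
  obtain ⟨hα, st, hsites, hcells, hlast⟩ := hA
  have hwc : 0 < w s(v, c) := hw _ (T.mem_edgeSet.mpr (pair_adj hT r hpair))
  have hdvu : ∀ u ∈ descend T r c, d v u = w s(v, c) + d c u :=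
    fun u hu => d_into hT r hw hd hpair hu
  have hpair' : ∀ x : V, (T.Adj v x ∧ x ∈ descend T r v) ↔ (x = c' ∨ x = c) := by
    intro x; rw [hpair x]; tauto
  -- KEY1 : at `v` the new site wins
  have hkey1 : ∀ t ∈ Jset T r U v, t ≠ iv v → α ≤ d (st t) v := by
    intro t ht htne
    have hv : v ∈ U (iv v) ∩ descend T r v := ⟨hiv v, self_mem_descend T r v⟩
    rw [← hlast] at hv
    have := hv.2 t ht htne
    rw [d_self hd] at this
    linarith
  -- cross bound : sites in the other subtree are far from `descend c`
  have hcross : ∀ t ∈ Jset T r U c', t ≠ iv v → ∀ u ∈ descend T r c,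
      α + d v u ≤ d (st t) u := by
    intro t ht htne u hu
    have hst : st t ∈ descend T r c' :=
      U_loc hT r hdisj hUconn hiv hpair' ht htne
        (hSU t (hsites t (J_child_subset hT r hpair' ht) htne))
    have := d_cross hT r hw hd hnecc' hpair hst (Or.inr hu)
    have h2 := hkey1 t (J_child_subset hT r hpair' ht) htne
    linarith
  refine ⟨by linarith, st, ?_, ?_, ?_⟩
  · intro j hj hjne
    exact hsites j (J_child_subset hT r hpair hj) (hivc ▸ hjne)
  · intro j hj hjne
    rw [hivc] at hjne
    ext u
    simp only [Set.mem_setOf_eq]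
    constructor
    · rintro ⟨h1, h2, h3⟩
      have he := hdvu u h1
      have hglob : u ∈ U j ∩ descend T r v := by
        rw [← hcells j (J_child_subset hT r hpair hj) hjne]
        refine ⟨descend_child_subset hT r (pair_adj hT r hpair) (pair_mem hT r hpair) h1,
          ?_, by linarith⟩
        intro t ht htne
        rcases J_decomp hT r hdisj hiv hpair ht htne with htc | htc'
        · exact h2 t htc (hivc ▸ htne)
        · have := hcross t htc' htne u h1
          linarith
      exact ⟨hglob.1, h1⟩
    · rintro ⟨h1, h2⟩
      have hglob : u ∈ U j ∩ descend T r v :=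
        ⟨h1, descend_child_subset hT r (pair_adj hT r hpair) (pair_mem hT r hpair) h2⟩
      rw [← hcells j (J_child_subset hT r hpair hj) hjne] at hglob
      obtain ⟨-, hcomp, hbound⟩ := hglob
      refine ⟨h2, fun t ht htne =>
        hcomp t (J_child_subset hT r hpair ht) (hivc ▸ htne), ?_⟩
      have he := hdvu u h2
      linarith
  · rw [hivc]
    ext u
    simp only [Set.mem_setOf_eq]
    constructor
    · rintro ⟨h1, h2⟩
      have hglob : u ∈ U (iv v) ∩ descend T r v := by
        rw [← hlast]
        refine ⟨descend_child_subset hT r (pair_adj hT r hpair) (pair_mem hT r hpair) h1,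
          ?_⟩
        intro t ht htne
        rcases J_decomp hT r hdisj hiv hpair ht htne with htc | htc'
        · have := h2 t htc (hivc ▸ htne)
          have he := hdvu u h1
          linarith
        · exact hcross t htc' htne u h1
      exact ⟨hglob.1, h1⟩
    · rintro ⟨h1, h2⟩
      have hglob : u ∈ U (iv v) ∩ descend T r v :=
        ⟨h1, descend_child_subset hT r (pair_adj hT r hpair) (pair_mem hT r hpair) h2⟩
      rw [← hlast] at hglob
      refine ⟨h2, fun t ht htne => ?_⟩
      have := hglob.2 t (J_child_subset hT r hpair ht) (hivc ▸ htne)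
      have he := hdvu u h2
      linarith

/-- Forward direction, case `iv c ≠ iv v`. -/
lemma fwd_B {α : ℝ} (hivc : iv c ≠ iv v) (hA : α ∈ Aset T r d U S iv v) :
    ∃ y ∈ Bset T r d U S iv c, y - w s(v, c) < α ∧ α < y + w s(v, c) := by
  obtain ⟨hα, st, hsites, hcells, hlast⟩ := hA
  have hwc : 0 < w s(v, c) := hw _ (T.mem_edgeSet.mpr (pair_adj hT r hpair))
  have hdvu : ∀ u ∈ descend T r c, d v u = w s(v, c) + d c u :=
    fun u hu => d_into hT r hw hd hpair hu
  have hivvJ : iv v ∉ Jset T r U c :=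
    fun hmem => hivc (ivv_mem_J_child hT r hdisj hUconn hiv hpair hmem)
  have hkey1 : ∀ t ∈ Jset T r U v, t ≠ iv v → α ≤ d (st t) v := by
    intro t ht htne
    have hv : v ∈ U (iv v) ∩ descend T r v := ⟨hiv v, self_mem_descend T r v⟩
    rw [← hlast] at hv
    have := hv.2 t ht htne
    rw [d_self hd] at this
    linarith
  have hkey2 : ∀ j ∈ Jset T r U c, st j ∈ S j ∩ descend T r c := by
    intro j hj
    have hjne : j ≠ iv v := fun hh => hivvJ (hh ▸ hj)
    have h1 := hsites j (J_child_subset hT r hpair hj) hjne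
    exact ⟨h1, U_loc hT r hdisj hUconn hiv hpair hj hjne (hSU j h1)⟩
  have hic : iv c ∈ Jset T r U c := ivc_mem_J r hiv
  have hicv : iv c ∈ Jset T r U v := J_child_subset hT r hpair hic
  set y := d (st (iv c)) c with hy
  have hstc : st (iv c) ∈ descend T r c := (hkey2 _ hic).2
  have hdicv : d (st (iv c)) v = y + w s(v, c) := by
    have h4 : d (st (iv c)) v = d (st (iv c)) c + d c v :=
      d_out hT r hw hd hpair hstc
        (not_descend_child hT r (pair_adj hT r hpair) (pair_mem hT r hpair))
    have h5 : d c v = w s(v, c) := by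
      rw [d_adj hT hw hd (pair_adj hT r hpair).symm, Sym2.eq_swap]
    rw [h4, h5]
  -- `y ≤ d (st t) c` for every admissible global `t`
  have hymin : ∀ t ∈ Jset T r U v, t ≠ iv v → y ≤ d (st t) c := by
    intro t ht htne
    have hc : c ∈ U (iv c) ∩ descend T r v :=
      ⟨hiv c, (pair_mem hT r hpair)⟩
    rw [← hcells (iv c) hicv hivc] at hc
    exact hc.2.1 t ht htne
  refine ⟨y, ⟨st, hkey2, ?_, rfl⟩, ?_, ?_⟩
  · -- the local cells
    intro j hj
    have hjne : j ≠ iv v := fun hh => hivvJ (hh ▸ hj)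
    ext u
    simp only [Set.mem_setOf_eq]
    constructor
    · rintro ⟨h1, h2⟩
      have hju : iv u ∈ Jset T r U c := ⟨u, hiv u, h1⟩
      have hjune : iv u ≠ iv v := fun hh => hivvJ (hh ▸ hju)
      have humem : u ∈ U (iv u) ∩ descend T r v :=
        ⟨hiv u, descend_child_subset hT r (pair_adj hT r hpair) (pair_mem hT r hpair) h1⟩
      rw [← hcells (iv u) (J_child_subset hT r hpair hju) hjune] at humem
      obtain ⟨-, hcomp', hbound'⟩ := humem
      have hglob : u ∈ U j ∩ descend T r v := by
        rw [← hcells j (J_child_subset hT r hpair hj) hjne]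
        refine ⟨descend_child_subset hT r (pair_adj hT r hpair) (pair_mem hT r hpair) h1,
          ?_, le_trans (h2 (iv u) hju) hbound'⟩
        intro t ht htne
        by_cases htc : t ∈ Jset T r U c
        · exact h2 t htc
        · exact le_trans (h2 (iv u) hju) (hcomp' t ht htne)
      exact ⟨hglob.1, h1⟩
    · rintro ⟨h1, h2⟩
      have hglob : u ∈ U j ∩ descend T r v :=
        ⟨h1, descend_child_subset hT r (pair_adj hT r hpair) (pair_mem hT r hpair) h2⟩
      rw [← hcells j (J_child_subset hT r hpair hj) hjne] at hglob
      refine ⟨h2, fun t ht => hglob.2.1 t (J_child_subset hT r hpair ht)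
        (fun hh => hivvJ (hh ▸ ht))⟩
  · -- lower bound : `y - w < α`, from `c` not being in the cell of `iv v`
    have hcnot : c ∉ U (iv v) := by
      intro hmem
      exact hivc (eq_iv hdisj hiv hmem).symm
    have hcnot2 : c ∉ {u | u ∈ descend T r v ∧
        ∀ t ∈ Jset T r U v, t ≠ iv v → α + d v u ≤ d (st t) u} := by
      rw [hlast]; exact fun hh => hcnot hh.1
    simp only [Set.mem_setOf_eq, not_and, not_forall] at hcnot2
    obtain ⟨t, ht, htne, hlt⟩ := hcnot2 (pair_mem hT r hpair)
    push_neg at hlt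
    have h5 : d v c = w s(v, c) := d_adj hT hw hd (pair_adj hT r hpair)
    have := hymin t ht htne
    rw [h5] at hlt
    linarith
  · -- upper bound : `α < y + w`, from `v` not being in the cell of `iv c`
    have hvnot : v ∉ U (iv c) := by
      intro hmem
      exact hivc (eq_iv hdisj hiv hmem)
    have hvnot2 : v ∉ U (iv c) ∩ descend T r v := fun hh => hvnot hh.1
    rw [← hcells (iv c) hicv hivc] at hvnot2
    simp only [Set.mem_setOf_eq, not_and, not_forall] at hvnot2
    rcases Classical.em ((∀ t ∈ Jset T r U v, t ≠ iv v → d (st (iv c)) v ≤ d (st t) v)) with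
      hcase | hcase
    · have := hvnot2 (self_mem_descend T r v) hcase
      rw [d_self hd, hdicv] at this
      push_neg at this
      linarith
    · push_neg at hcase
      obtain ⟨t, ht, htne, hlt⟩ := hcase
      have h6 := hkey1 t ht htne
      rw [hdicv] at hlt
      linarith

/-- merging: the global cell equality for an index living in the subtree of `c`. -/
lemma back_cell {α : ℝ} {stc stc' st : Fin k → V}
    (hG : Good T r d U S iv v c α stc) (hG' : Good T r d U S iv v c' α stc')
    (hstc : ∀ j ∈ Jset T r U c, j ≠ iv v → st j = stc j)
    (hstc' : ∀ j ∈ Jset T r U c', j ≠ iv v → st j = stc' j)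
    {j : Fin k} (hj : j ∈ Jset T r U c) (hjne : j ≠ iv v) :
    {u | u ∈ descend T r v ∧ (∀ t ∈ Jset T r U v, t ≠ iv v → d (st j) u ≤ d (st t) u) ∧
      d (st j) u ≤ α + d v u} = U j ∩ descend T r v := by
  have hpair' : ∀ x : V, (T.Adj v x ∧ x ∈ descend T r v) ↔ (x = c' ∨ x = c) := by
    intro x; rw [hpair x]; tauto
  obtain ⟨hs1, hc1, hcov1, hg1⟩ := hG
  obtain ⟨hs2, hc2, hcov2, hg2⟩ := hG'
  have hjc : st j = stc j := hstc j hj hjne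
  have hjdesc : stc j ∈ descend T r c :=
    U_loc hT r hdisj hUconn hiv hpair hj hjne (hSU j (hs1 j hj hjne))
  ext u
  simp only [Set.mem_setOf_eq, Set.mem_inter_iff]
  constructor
  · rintro ⟨h1, h2, h3⟩
    rcases descend_decomp hT r hpair h1 with rfl | hu | hu
    · exfalso
      have hgg := hg1 j hj hjne
      rw [d_self hd, hjc] at h3
      linarith
    · have hloc : u ∈ U j ∩ descend T r c := by
        rw [← hc1 j hj hjne]
        refine ⟨hu, fun t ht htne => ?_, by rw [← hjc]; exact h3⟩
        rw [← hjc, ← hstc t ht htne]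
        exact h2 t (J_child_subset hT r hpair ht) htne
      exact ⟨hloc.1, h1⟩
    · exfalso
      have hcross : d (stc j) u = d (stc j) v + d v u :=
        d_cross hT r hw hd (Ne.symm hnecc') hpair' hjdesc (Or.inr hu)
      have hgg := hg1 j hj hjne
      rw [hjc] at h3
      linarith
  · rintro ⟨h1, h2⟩
    have h1' : u ∈ U j ∩ descend T r c :=
      ⟨h1, U_loc hT r hdisj hUconn hiv hpair hj hjne h1⟩
    rw [← hc1 j hj hjne] at h1'
    obtain ⟨hu1, hu2, hu3⟩ := h1'
    refine ⟨h2, ?_, by rw [hjc]; exact hu3⟩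
    intro t ht htne
    rcases J_decomp hT r hdisj hiv hpair ht htne with htc | htc'
    · rw [hjc, hstc t htc htne]
      exact hu2 t htc htne
    · have hstd : stc' t ∈ descend T r c' :=
        U_loc hT r hdisj hUconn hiv hpair' htc' htne (hSU t (hs2 t htc' htne))
      have hcr : d (stc' t) u = d (stc' t) v + d v u :=
        d_cross hT r hw hd hnecc' hpair hstd (Or.inr hu1)
      have hgg := hg2 t htc' htne
      rw [hjc, hstc' t htc' htne]
      linarith

/-- merging: the backward direction. -/
lemma back {α : ℝ} (hα : 0 < α) {stc stc' : Fin k → V}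
    (hG : Good T r d U S iv v c α stc) (hG' : Good T r d U S iv v c' α stc') :
    α ∈ Aset T r d U S iv v := by
  classical
  have hpair' : ∀ x : V, (T.Adj v x ∧ x ∈ descend T r v) ↔ (x = c' ∨ x = c) := by
    intro x; rw [hpair x]; tauto
  set st : Fin k → V :=
    fun j => if j ∈ Jset T r U c ∧ j ≠ iv v then stc j else stc' j with hstdef
  have hstc : ∀ j ∈ Jset T r U c, j ≠ iv v → st j = stc j := by
    intro j hj hjne
    simp only [hstdef, if_pos (And.intro hj hjne)]
  have hstc' : ∀ j ∈ Jset T r U c', j ≠ iv v → st j = stc' j := by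
    intro j hj hjne
    have hnot : ¬(j ∈ Jset T r U c ∧ j ≠ iv v) := by
      rintro ⟨h1, -⟩
      exact J_pair_disjoint hT r hw hd hdisj hUconn hiv hnecc' hpair h1 hj hjne
    simp only [hstdef, if_neg hnot]
  obtain ⟨hs1, hc1, hcov1, hg1⟩ := hG
  obtain ⟨hs2, hc2, hcov2, hg2⟩ := hG'
  refine ⟨hα, st, ?_, ?_, ?_⟩
  · intro j hj hjne
    rcases J_decomp hT r hdisj hiv hpair hj hjne with hjc | hjc'
    · rw [hstc j hjc hjne]; exact hs1 j hjc hjne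
    · rw [hstc' j hjc' hjne]; exact hs2 j hjc' hjne
  · intro j hj hjne
    rcases J_decomp hT r hdisj hiv hpair hj hjne with hjc | hjc'
    · exact back_cell hT r hw hd hdisj hUconn hSU hiv hnecc' hpair
        ⟨hs1, hc1, hcov1, hg1⟩ ⟨hs2, hc2, hcov2, hg2⟩ hstc hstc' hjc hjne
    · exact back_cell hT r hw hd hdisj hUconn hSU hiv (Ne.symm hnecc') hpair'
        ⟨hs2, hc2, hcov2, hg2⟩ ⟨hs1, hc1, hcov1, hg1⟩ hstc' hstc hjc' hjne
  · ext u
    simp only [Set.mem_setOf_eq, Set.mem_inter_iff]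
    constructor
    · rintro ⟨h1, h2⟩
      rcases descend_decomp hT r hpair h1 with hu0 | hu | hu
      · exact ⟨by rw [hu0]; exact hiv v, h1⟩
      · have hloc : u ∈ U (iv v) ∩ descend T r c := by
          rw [← hcov1]
          refine ⟨hu, fun t ht htne => ?_⟩
          rw [← hstc t ht htne]
          exact h2 t (J_child_subset hT r hpair ht) htne
        exact ⟨hloc.1, h1⟩
      · have hloc : u ∈ U (iv v) ∩ descend T r c' := by
          rw [← hcov2]
          refine ⟨hu, fun t ht htne => ?_⟩
          rw [← hstc' t ht htne]
          exact h2 t (J_child_subset hT r hpair' ht) htne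
        exact ⟨hloc.1, h1⟩
    · rintro ⟨h1, h2⟩
      refine ⟨h2, fun t ht htne => ?_⟩
      rcases descend_decomp hT r hpair h2 with hu0 | hu | hu
      · rw [hu0, d_self hd]
        rcases J_decomp hT r hdisj hiv hpair ht htne with htc | htc'
        · rw [hstc t htc htne]
          have := hg1 t htc htne
          linarith
        · rw [hstc' t htc' htne]
          have := hg2 t htc' htne
          linarith
      · rcases J_decomp hT r hdisj hiv hpair ht htne with htc | htc'
        · have hloc : u ∈ U (iv v) ∩ descend T r c := ⟨h1, hu⟩
          rw [← hcov1] at hloc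
          rw [hstc t htc htne]
          exact hloc.2 t htc htne
        · have hstd : stc' t ∈ descend T r c' :=
            U_loc hT r hdisj hUconn hiv hpair' htc' htne (hSU t (hs2 t htc' htne))
          have hcr : d (stc' t) u = d (stc' t) v + d v u :=
            d_cross hT r hw hd hnecc' hpair hstd (Or.inr hu)
          have := hg2 t htc' htne
          rw [hstc' t htc' htne]
          linarith
      · rcases J_decomp hT r hdisj hiv hpair ht htne with htc | htc'
        · have hstd : stc t ∈ descend T r c :=
            U_loc hT r hdisj hUconn hiv hpair htc htne (hSU t (hs1 t htc htne))
          have hcr : d (stc t) u = d (stc t) v + d v u :=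
            d_cross hT r hw hd (Ne.symm hnecc') hpair' hstd (Or.inr hu)
          have := hg1 t htc htne
          rw [hstc t htc htne]
          linarith
        · have hloc : u ∈ U (iv v) ∩ descend T r c' := ⟨h1, hu⟩
          rw [← hcov2] at hloc
          rw [hstc' t htc' htne]
          exact hloc.2 t htc' htne

/-- the master recurrence at `v`, in terms of the two children `c`, `c'`. -/
lemma master {α : ℝ} :
    α ∈ Aset T r d U S iv v ↔ 0 < α ∧
      ((iv c = iv v → (α + w s(v, c)) ∈ Aset T r d U S iv c) ∧
       (iv c ≠ iv v → ∃ y ∈ Bset T r d U S iv c,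
          y - w s(v, c) < α ∧ α < y + w s(v, c))) ∧
      ((iv c' = iv v → (α + w s(v, c')) ∈ Aset T r d U S iv c') ∧
       (iv c' ≠ iv v → ∃ y ∈ Bset T r d U S iv c',
          y - w s(v, c') < α ∧ α < y + w s(v, c'))) := by
  have hpair' : ∀ x : V, (T.Adj v x ∧ x ∈ descend T r v) ↔ (x = c' ∨ x = c) := by
    intro x; rw [hpair x]; tauto
  constructor
  · intro hA
    refine ⟨hA.1, ⟨fun h => fwd_A hT r hw hd hdisj hUconn hSU hiv hnecc' hpair h hA,
      fun h => fwd_B hT r hw hd hdisj hUconn hSU hiv hnecc' hpair h hA⟩,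
      ⟨fun h => fwd_A hT r hw hd hdisj hUconn hSU hiv (Ne.symm hnecc') hpair' h hA,
      fun h => fwd_B hT r hw hd hdisj hUconn hSU hiv (Ne.symm hnecc') hpair' h hA⟩⟩
  · rintro ⟨hα, ⟨hA1, hB1⟩, ⟨hA2, hB2⟩⟩
    obtain ⟨stc, hGc⟩ : ∃ stc, Good T r d U S iv v c α stc := by
      by_cases hc : iv c = iv v
      · exact good_of_A hT r hw hd hdisj hUconn hSU hiv hnecc' hpair hc (hA1 hc)
      · obtain ⟨y, hy, hy1, hy2⟩ := hB1 hc
        exact good_of_B hT r hw hd hdisj hUconn hSU hiv hnecc' hpair hc hα hy hy1 hy2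
    obtain ⟨stc', hGc'⟩ : ∃ stc', Good T r d U S iv v c' α stc' := by
      by_cases hc : iv c' = iv v
      · exact good_of_A hT r hw hd hdisj hUconn hSU hiv (Ne.symm hnecc') hpair' hc (hA2 hc)
      · obtain ⟨y, hy, hy1, hy2⟩ := hB2 hc
        exact good_of_B hT r hw hd hdisj hUconn hSU hiv (Ne.symm hnecc') hpair'
          hc hα hy hy1 hy2
    exact back hT r hw hd hdisj hUconn hSU hiv hnecc' hpair hα hGc hGc'

end Main

end VorAux

/-- The dynamic-programming recurrence for `A(v)` at a vertex `v` with two children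
`v₁, v₂`, by cases on whether the cells of `v₁`, `v₂` agree with the cell of `v`. -/
theorem Aset_recurrence
    {V : Type*} [Fintype V] [DecidableEq V] (T : SimpleGraph V) (hT : T.IsTree)
    (w : Sym2 V → ℝ) (hw : ∀ e ∈ T.edgeSet, 0 < w e)
    (d : V → V → ℝ)
    (hd : ∀ (u v : V) (p : T.Walk u v), p.IsPath → (p.edges.map w).sum = d u v)
    (r : V) (hroot : ∃! u, T.Adj r u)
    (hdeg : ∀ u : V, ({c | T.Adj u c ∧ c ∈ descend T r u} : Set V).ncard ≤ 2)
    (k : ℕ) (U S : Fin k → Set V)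
    (hcover : (⋃ i, U i) = Set.univ)
    (hdisj : ∀ i j, i ≠ j → Disjoint (U i) (U j))
    (hUconn : ∀ i, (T.induce (U i)).Connected)
    (hSU : ∀ i, S i ⊆ U i)
    (iv : V → Fin k) (hiv : ∀ u, u ∈ U (iv u))
    (v v₁ v₂ : V) (hne : v₁ ≠ v₂)
    (hchild : ∀ c : V, (T.Adj v c ∧ c ∈ descend T r v) ↔ (c = v₁ ∨ c = v₂)) :
    (iv v = iv v₁ ∧ iv v = iv v₂ →
      Aset T r d U S iv v = Set.Ioi (0 : ℝ) ∩
        (Ashift T r w d U S iv v v₁ ∩ Ashift T r w d U S iv v v₂)) ∧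
    (iv v = iv v₁ ∧ iv v ≠ iv v₂ →
      Aset T r d U S iv v = Set.Ioi (0 : ℝ) ∩
        (Ashift T r w d U S iv v v₁ ∩ Cshift T r w d U S iv v v₂)) ∧
    (iv v = iv v₂ ∧ iv v ≠ iv v₁ →
      Aset T r d U S iv v = Set.Ioi (0 : ℝ) ∩
        (Ashift T r w d U S iv v v₂ ∩ Cshift T r w d U S iv v v₁)) ∧
    (iv v ≠ iv v₁ ∧ iv v ≠ iv v₂ →
      Aset T r d U S iv v = Set.Ioi (0 : ℝ) ∩
        (Cshift T r w d U S iv v v₁ ∩ Cshift T r w d U S iv v v₂)) := by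
  have hAsh : ∀ (c0 : V) (α : ℝ),
      α ∈ Ashift T r w d U S iv v c0 ↔ (α + w s(v, c0)) ∈ Aset T r d U S iv c0 := by
    intro c0 α
    constructor
    · rintro ⟨y, hy, rfl⟩
      have hyy : y - w s(v, c0) + w s(v, c0) = y := by ring
      rwa [hyy]
    · intro h
      exact ⟨α + w s(v, c0), h, by ring⟩
  have hM := fun α : ℝ =>
    VorAux.master hT r hw hd hdisj hUconn hSU hiv hne hchild (α := α)
  refine ⟨?_, ?_, ?_, ?_⟩
  · rintro ⟨h1, h2⟩
    ext α
    simp only [Set.mem_inter_iff, Set.mem_Ioi]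
    rw [hM α]
    constructor
    · rintro ⟨hα, ⟨a1, -⟩, ⟨a2, -⟩⟩
      exact ⟨hα, (hAsh v₁ α).mpr (a1 h1.symm), (hAsh v₂ α).mpr (a2 h2.symm)⟩
    · rintro ⟨hα, hs1, hs2⟩
      exact ⟨hα, ⟨fun _ => (hAsh v₁ α).mp hs1, fun hcon => absurd h1.symm hcon⟩,
        ⟨fun _ => (hAsh v₂ α).mp hs2, fun hcon => absurd h2.symm hcon⟩⟩
  · rintro ⟨h1, h2⟩
    ext α
    simp only [Set.mem_inter_iff, Set.mem_Ioi]
    rw [hM α]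
    constructor
    · rintro ⟨hα, ⟨a1, -⟩, ⟨-, b2⟩⟩
      exact ⟨hα, (hAsh v₁ α).mpr (a1 h1.symm), b2 (fun hcon => h2 hcon.symm)⟩
    · rintro ⟨hα, hs1, hs2⟩
      exact ⟨hα, ⟨fun _ => (hAsh v₁ α).mp hs1, fun hcon => absurd h1.symm hcon⟩,
        ⟨fun hcon => absurd hcon.symm h2, fun _ => hs2⟩⟩
  · rintro ⟨h1, h2⟩
    ext α
    simp only [Set.mem_inter_iff, Set.mem_Ioi]
    rw [hM α]
    constructor
    · rintro ⟨hα, ⟨-, b1⟩, ⟨a2, -⟩⟩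
      exact ⟨hα, (hAsh v₂ α).mpr (a2 h1.symm), b1 (fun hcon => h2 hcon.symm)⟩
    · rintro ⟨hα, hs1, hs2⟩
      exact ⟨hα, ⟨fun hcon => absurd hcon.symm h2, fun _ => hs2⟩,
        ⟨fun _ => (hAsh v₂ α).mp hs1, fun hcon => absurd h1.symm hcon⟩⟩
  · rintro ⟨h1, h2⟩
    ext α
    simp only [Set.mem_inter_iff, Set.mem_Ioi]
    rw [hM α]
    constructor
    · rintro ⟨hα, ⟨-, b1⟩, ⟨-, b2⟩⟩
      exact ⟨hα, b1 (fun hcon => h1 hcon.symm), b2 (fun hcon => h2 hcon.symm)⟩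
    · rintro ⟨hα, hs1, hs2⟩
      exact ⟨hα, ⟨fun hcon => absurd hcon.symm h1, fun _ => hs1⟩,
        ⟨fun hcon => absurd hcon.symm h2, fun _ => hs2⟩⟩
end

section
/- Let v be a vertex of T with two children v_1 and v_2. Then B(v) = χ(v) ∪ ((B'(v_1) ∩ A'(v_2)) ∪ (B'(v_2) ∩ A'(v_1))) if i(v) = i(v_1) = i(v_2); B(v) = χ(v) ∪ (B'(v_1) ∩ C'(v_2)) if i(v) = i(v_1) ≠ i(v_2); B(v) = χ(v) ∪ (B'(v_2) ∩ C'(v_1)) if i(v) = i(v_2) ≠ i(v_1); and B(v) = χ(v) if i(v) ≠ i(v_1) and i(v) ≠ i(v_2). -/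
/-- `χ(v)`: the singleton `{0}` when `v` itself is a valid site placement for its cell
(i.e. `v ∈ S_{i(v)}` and `0` lies in `A'(vⱼ)` or `C'(vⱼ)` for each child `vⱼ`, according
to whether `i(vⱼ) = i(v)` or not), and `∅` otherwise. -/
def chiSet {V : Type*} (T : SimpleGraph V) (r : V) (w : Sym2 V → ℝ) (d : V → V → ℝ)
    {k : ℕ} (U S : Fin k → Set V) (iv : V → Fin k) (v v₁ v₂ : V) : Set ℝ :=
  {x | x = 0 ∧ v ∈ S (iv v) ∧
    (iv v = iv v₁ → (0 : ℝ) ∈ Ashift T r w d U S iv v v₁) ∧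
    (iv v ≠ iv v₁ → (0 : ℝ) ∈ Cshift T r w d U S iv v v₁) ∧
    (iv v = iv v₂ → (0 : ℝ) ∈ Ashift T r w d U S iv v v₂) ∧
    (iv v ≠ iv v₂ → (0 : ℝ) ∈ Cshift T r w d U S iv v v₂)}

open SimpleGraph
set_option linter.unusedSectionVars false

section Dev
variable {V : Type*} [DecidableEq V] {T : SimpleGraph V} (hT : T.IsTree)
  {w : Sym2 V → ℝ} (hw : ∀ e ∈ T.edgeSet, 0 < w e)
  {d : V → V → ℝ}
  (hd : ∀ (u v : V) (p : T.Walk u v), p.IsPath → (p.edges.map w).sum = d u v)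

include hT in
theorem path_unique {a b : V} {p q : T.Walk a b} (hp : p.IsPath) (hq : q.IsPath) : p = q := by
  obtain ⟨p₀, -, hu⟩ := hT.existsUnique_path a b
  rw [hu p hp, hu q hq]

include hT in
theorem path_exists (a b : V) : ∃ p : T.Walk a b, p.IsPath :=
  (hT.existsUnique_path a b).exists

include hw in
theorem wsum_nonneg {a b : V} (p : T.Walk a b) : 0 ≤ (p.edges.map w).sum := by
  apply List.sum_nonneg
  intro x hx
  obtain ⟨e, he, rfl⟩ := List.mem_map.1 hx
  exact (hw e (p.edges_subset_edgeSet he)).le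

include hd in
theorem d_self (a : V) : d a a = 0 := by
  have := hd a a .nil (by simp)
  simpa using this.symm

include hT hw hd in
theorem d_nonneg (a b : V) : 0 ≤ d a b := by
  obtain ⟨p, hp⟩ := path_exists hT a b
  rw [← hd a b p hp]; exact wsum_nonneg hw p

include hT hd in
theorem d_symm (a b : V) : d a b = d b a := by
  obtain ⟨p, hp⟩ := path_exists hT a b
  rw [← hd a b p hp, ← hd b a p.reverse hp.reverse]
  simp [List.sum_reverse]

include hd in
theorem d_adj {a b : V} (h : T.Adj a b) : d a b = w s(a, b) := by
  have hp : (Walk.cons h .nil).IsPath := by simp [h.ne]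
  have := hd a b (.cons h .nil) hp
  simpa using this.symm

include hd in
theorem d_split' {a b m : V} (p : T.Walk a b) (hp : p.IsPath) (hm : m ∈ p.support) :
    d a m + d m b = d a b := by
  rw [← hd a b p hp, ← hd a m (p.takeUntil m hm) (hp.takeUntil hm),
    ← hd m b (p.dropUntil m hm) (hp.dropUntil hm)]
  conv_rhs => rw [← p.take_spec hm]
  rw [Walk.edges_append, List.map_append, List.sum_append]

include hT hd in
theorem d_split {a b m : V} (h : ∀ p : T.Walk a b, p.IsPath → m ∈ p.support) :
    d a m + d m b = d a b := by
  obtain ⟨p, hp⟩ := path_exists hT a b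
  exact d_split' hd p hp (h p hp)

include hT hw hd in
theorem d_step {a c b : V} (h : T.Adj a c) : d a b ≤ w s(a, c) + d c b := by
  obtain ⟨p, hp⟩ := path_exists hT c b
  by_cases ha : a ∈ p.support
  · have := d_split' hd p hp ha
    have h1 : 0 ≤ d c a := d_nonneg hT hw hd c a
    have h2 : 0 < w s(a, c) := hw _ (T.mem_edgeSet.mpr h)
    linarith
  · have hp' : (Walk.cons h p).IsPath := hp.cons ha
    have := hd a b (.cons h p) hp'
    rw [← hd c b p hp]
    simp only [Walk.edges_cons, List.map_cons, List.sum_cons] at this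
    linarith

include hT hw hd in
theorem walk_ge {a b : V} (p : T.Walk a b) : d a b ≤ (p.edges.map w).sum := by
  induction p with
  | nil => simp [d_self hd]
  | cons h q ih =>
    simp only [Walk.edges_cons, List.map_cons, List.sum_cons]
    calc d _ _ ≤ w s(_, _) + d _ _ := d_step hT hw hd h
    _ ≤ _ := by linarith

include hT hw hd in
theorem d_triangle (a c b : V) : d a b ≤ d a c + d c b := by
  obtain ⟨p, hp⟩ := path_exists hT a c
  obtain ⟨q, hq⟩ := path_exists hT c b
  have := walk_ge hT hw hd (p.append q)
  rwa [Walk.edges_append, List.map_append, List.sum_append, hd _ _ p hp, hd _ _ q hq] at this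

variable {r : V}

theorem descend_self (v : V) : v ∈ descend T r v :=
  fun p _ => p.end_mem_support

include hT in
theorem mem_descend_iff {u c : V} {p : T.Walk r u} (hp : p.IsPath) :
    u ∈ descend T r c ↔ c ∈ p.support := by
  constructor
  · exact fun h => h p hp
  · intro hc q hq
    rwa [path_unique hT hq hp]

include hT in
theorem sep {c x y : V} (hx : x ∈ descend T r c) (hy : y ∉ descend T r c)
    (p : T.Walk x y) (hp : p.IsPath) : c ∈ p.support := by
  simp only [descend, Set.mem_setOf_eq, not_forall] at hy
  obtain ⟨q, hq, hcq⟩ := hy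
  have hb : (q.append p.reverse).bypass.IsPath := Walk.bypass_isPath _
  have hc : c ∈ (q.append p.reverse).bypass.support := hx _ hb
  have := Walk.support_bypass_subset _ hc
  rw [Walk.support_append] at this
  rcases List.mem_append.1 this with h | h
  · exact absurd h hcq
  · have := List.mem_of_mem_tail h
    rwa [Walk.support_reverse, List.mem_reverse] at this

theorem descend_mono {c v : V} (hc : c ∈ descend T r v) :
    descend T r c ⊆ descend T r v := by
  intro u hu p hp
  have hcp : c ∈ p.support := hu p hp
  have : v ∈ (p.takeUntil c hcp).support := hc _ (hp.takeUntil hcp)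
  exact p.support_takeUntil_subset hcp this

include hT in
theorem not_descend_antisym {c v : V} (hc : c ∈ descend T r v) (hne : c ≠ v) :
    v ∉ descend T r c := by
  intro hv
  obtain ⟨p, hp⟩ := path_exists hT r v
  have hcp : c ∈ p.support := hv p hp
  have hvq : v ∈ (p.takeUntil c hcp).support := hc _ (hp.takeUntil hcp)
  have hnd := hp.support_nodup
  conv at hnd => rw [← p.take_spec hcp, Walk.support_append]
  have hdisj := List.disjoint_of_nodup_append hnd
  apply hdisj hvq
  have hvd : v ∈ (p.dropUntil c hcp).support := Walk.end_mem_support _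
  have : (p.dropUntil c hcp).support = c :: (p.dropUntil c hcp).support.tail :=
    (Walk.support_eq_cons _)
  rw [this] at hvd
  rw [List.mem_cons] at hvd
  rcases hvd with h | h
  · exact absurd h.symm hne
  · exact h

include hT hd in
theorem d_parent {c u : V} (hadj : T.Adj v c) (hmem : c ∈ descend T r v)
    (hu : u ∈ descend T r c) : d v u = w s(v, c) + d c u := by
  have hvc : v ∉ descend T r c := not_descend_antisym hT hmem hadj.ne'
  have hsplit : d v c + d c u = d v u := by
    apply d_split hT hd
    intro p hp
    have := sep hT hu hvc p.reverse hp.reverse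
    rwa [Walk.support_reverse, List.mem_reverse] at this
  rw [← hsplit, d_adj hd hadj]

variable {v v₁ v₂ : V} (hne : v₁ ≠ v₂)
  (hchild : ∀ c : V, (T.Adj v c ∧ c ∈ descend T r v) ↔ (c = v₁ ∨ c = v₂))

include hT in
theorem support_path_to_child {c : V} (hadj : T.Adj v c) (hmem : c ∈ descend T r v)
    {p₀ : T.Walk r v} (hp₀ : p₀.IsPath) {ρ : T.Walk r c} (hρ : ρ.IsPath) :
    ρ.support = p₀.support ++ [c] := by
  have hv : v ∈ ρ.support := hmem ρ hρ
  have heq : ρ.takeUntil v hv = p₀ := path_unique hT (hρ.takeUntil hv) hp₀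
  have hdrop : ρ.dropUntil v hv = Walk.cons hadj .nil :=
    path_unique hT (hρ.dropUntil hv) (by simp [hadj.ne])
  conv_lhs => rw [← ρ.take_spec hv]
  rw [Walk.support_append, heq, hdrop]
  simp

include hT hne hchild in
theorem descend_children_disjoint {u : V} (h₁ : u ∈ descend T r v₁)
    (h₂ : u ∈ descend T r v₂) : False := by
  have hadj₁ : T.Adj v v₁ := ((hchild v₁).mpr (Or.inl rfl)).1
  have hmem₁ : v₁ ∈ descend T r v := ((hchild v₁).mpr (Or.inl rfl)).2
  have hadj₂ : T.Adj v v₂ := ((hchild v₂).mpr (Or.inr rfl)).1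
  have hmem₂ : v₂ ∈ descend T r v := ((hchild v₂).mpr (Or.inr rfl)).2
  obtain ⟨p, hp⟩ := path_exists hT r u
  obtain ⟨p₀, hp₀⟩ := path_exists hT r v
  have hc₁ : v₁ ∈ p.support := h₁ p hp
  have hc₂ : v₂ ∈ p.support := h₂ p hp
  have hs₁ : (p.takeUntil v₁ hc₁).support = p₀.support ++ [v₁] :=
    support_path_to_child hT hadj₁ hmem₁ hp₀ (hp.takeUntil hc₁)
  have hs₂ : (p.takeUntil v₂ hc₂).support = p₀.support ++ [v₂] :=
    support_path_to_child hT hadj₂ hmem₂ hp₀ (hp.takeUntil hc₂)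
  have pr₁ : (p.takeUntil v₁ hc₁).support <+: p.support := by
    refine ⟨(p.dropUntil v₁ hc₁).support.tail, ?_⟩
    rw [← Walk.support_append, p.take_spec hc₁]
  have pr₂ : (p.takeUntil v₂ hc₂).support <+: p.support := by
    refine ⟨(p.dropUntil v₂ hc₂).support.tail, ?_⟩
    rw [← Walk.support_append, p.take_spec hc₂]
  have hlen : (p.takeUntil v₁ hc₁).support.length = (p.takeUntil v₂ hc₂).support.length := by
    rw [hs₁, hs₂]; simp
  have heq : (p.takeUntil v₁ hc₁).support = (p.takeUntil v₂ hc₂).support := by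
    rcases List.prefix_or_prefix_of_prefix pr₁ pr₂ with h | h
    · exact h.eq_of_length hlen
    · exact (h.eq_of_length hlen.symm).symm
  rw [hs₁, hs₂] at heq
  have := List.append_cancel_left heq
  simp only [List.cons.injEq] at this
  exact hne this.1

include hT hchild in
theorem children_cover {u : V} (hu : u ∈ descend T r v) :
    u = v ∨ u ∈ descend T r v₁ ∨ u ∈ descend T r v₂ := by
  by_cases huv : u = v
  · exact Or.inl huv
  right
  obtain ⟨p, hp⟩ := path_exists hT r u
  have hm : v ∈ p.support := hu p hp
  have hqp : (p.dropUntil v hm).IsPath := hp.dropUntil hm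
  obtain ⟨c, hadj, q', hq⟩ := (p.dropUntil v hm).exists_eq_cons_of_ne (fun h => huv h.symm)
  rw [hq, Walk.cons_isPath_iff] at hqp
  have hcq : c ∈ (p.dropUntil v hm).support := by
    rw [hq, Walk.support_cons]
    exact List.mem_cons_of_mem _ q'.start_mem_support
  have hcp : c ∈ p.support := p.support_dropUntil_subset hm hcq
  have hnd := hp.support_nodup
  conv at hnd => rw [← p.take_spec hm, Walk.support_append]
  have hdisj := List.disjoint_of_nodup_append hnd
  have hctail : c ∈ (p.dropUntil v hm).support.tail := by
    rw [hq, Walk.support_cons]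
    exact q'.start_mem_support
  have hcnot : c ∉ (p.takeUntil v hm).support := fun hcin => hdisj hcin hctail
  have hσs : ((p.takeUntil v hm).append (Walk.cons hadj .nil)).support
      = (p.takeUntil v hm).support ++ [c] := by
    rw [Walk.support_append]; simp
  have hσp : ((p.takeUntil v hm).append (Walk.cons hadj .nil)).IsPath := by
    rw [Walk.isPath_def, hσs, List.nodup_append]
    refine ⟨(hp.takeUntil hm).support_nodup, List.nodup_singleton _, ?_⟩
    intro a ha b hb
    rw [List.mem_singleton] at hb
    rintro rfl
    exact hcnot (hb ▸ ha)
  have hvσ : v ∈ ((p.takeUntil v hm).append (Walk.cons hadj .nil)).support := by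
    rw [hσs]
    exact List.mem_append_left _ (Walk.end_mem_support _)
  have hcdesc : c ∈ descend T r v := fun ρ hρ => by
    rw [path_unique hT hρ hσp]; exact hvσ
  have hud : u ∈ descend T r c := fun ρ hρ => by
    rw [path_unique hT hρ hp]; exact hcp
  rcases (hchild c).mp ⟨hadj, hcdesc⟩ with rfl | rfl
  · exact Or.inl hud
  · exact Or.inr hud

include hT hne hchild in
theorem path_cross {s u : V} (hs : s ∈ descend T r v₁) (hu : u ∈ descend T r v₂)
    (p : T.Walk s u) (hp : p.IsPath) : v ∈ p.support := by
  have hadj₁ : T.Adj v v₁ := ((hchild v₁).mpr (Or.inl rfl)).1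
  have hadj₂ : T.Adj v v₂ := ((hchild v₂).mpr (Or.inr rfl)).1
  have hs2 : s ∉ descend T r v₂ := fun h => descend_children_disjoint hT hne hchild hs h
  have h2 : v₂ ∈ p.support := by
    have := sep hT hu hs2 p.reverse hp.reverse
    rwa [Walk.support_reverse, List.mem_reverse] at this
  have hp₁ : (p.takeUntil v₂ h2).IsPath := hp.takeUntil h2
  have hv₂1 : v₂ ∉ descend T r v₁ := fun h =>
    descend_children_disjoint hT hne hchild h (descend_self v₂)
  have h1 : v₁ ∈ (p.takeUntil v₂ h2).support := sep hT hs hv₂1 _ hp₁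
  have hp₂ : ((p.takeUntil v₂ h2).dropUntil v₁ h1).IsPath := hp₁.dropUntil h1
  have hcan : ((p.takeUntil v₂ h2).dropUntil v₁ h1)
      = Walk.cons hadj₁.symm (Walk.cons hadj₂ .nil) := by
    apply path_unique hT hp₂
    rw [Walk.isPath_def]
    simp [hadj₁.ne', hadj₂.ne, hne]
  have hvin : v ∈ ((p.takeUntil v₂ h2).dropUntil v₁ h1).support := by
    rw [hcan, Walk.support_cons, Walk.support_cons]
    exact List.mem_cons_of_mem _ List.mem_cons_self
  exact p.support_takeUntil_subset h2
    ((p.takeUntil v₂ h2).support_dropUntil_subset h1 hvin)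

include hT hd hne hchild in
theorem d_cross {s u : V} (hs : s ∈ descend T r v₁) (hu : u ∈ descend T r v₂) :
    d s v + d v u = d s u :=
  d_split hT hd (fun p hp => path_cross hT hne hchild hs hu p hp)

include hT hd in
theorem d_child_parent {c s : V} (hadj : T.Adj v c) (hmem : c ∈ descend T r v)
    (hs : s ∈ descend T r c) : d s v = d s c + w s(v, c) := by
  have hvc : v ∉ descend T r c := not_descend_antisym hT hmem hadj.ne'
  have hsplit : d s c + d c v = d s v := by
    apply d_split hT hd
    intro p hp
    exact sep hT hs hvc p hp
  rw [← hsplit, d_symm hT hd c v, d_adj hd hadj]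

variable {k : ℕ} {U S : Fin k → Set V}
  (hdisj : ∀ i j, i ≠ j → Disjoint (U i) (U j))
  (hUconn : ∀ i, (T.induce (U i)).Connected)
  (hSU : ∀ i, S i ⊆ U i)
  {iv : V → Fin k} (hiv : ∀ u, u ∈ U (iv u))

include hdisj hiv in
theorem eq_iv {z : V} {j : Fin k} (h : z ∈ U j) : j = iv z := by
  by_contra hne'
  exact Set.disjoint_left.mp (hdisj j (iv z) hne') h (hiv z)

include hUconn in
theorem conn_path {j : Fin k} {x y : V} (hx : x ∈ U j) (hy : y ∈ U j) :
    ∃ p : T.Walk x y, p.IsPath ∧ ∀ z ∈ p.support, z ∈ U j := by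
  obtain ⟨q⟩ := (hUconn j).preconnected ⟨x, hx⟩ ⟨y, hy⟩
  refine ⟨(q.map (Embedding.induce (U j)).toHom).bypass, Walk.bypass_isPath _, ?_⟩
  intro z hz
  have := Walk.support_bypass_subset _ hz
  replace this := (congrArg (z ∈ ·) (Walk.support_map (f := (Embedding.induce (U j)).toHom) (p := q))).mp this
  obtain ⟨⟨z', hz'⟩, -, rfl⟩ := List.mem_map.1 this
  exact hz'

include hT hdisj hUconn hiv in
theorem U_subset_descend {c : V} {j : Fin k} (hne' : j ≠ iv c)
    (hJ : (U j ∩ descend T r c).Nonempty) : U j ⊆ descend T r c := by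
  intro z hz
  by_contra hzc
  obtain ⟨x, hxU, hxd⟩ := hJ
  obtain ⟨p, hp, hsup⟩ := conn_path hUconn hxU hz
  exact hne' (eq_iv hdisj hiv (hsup c (sep hT hxd hzc p hp)))

include hT hdisj hUconn hiv in
theorem not_mem_J {c : V} {j : Fin k} {z : V} (hne' : j ≠ iv c) (hz : z ∈ U j)
    (hzc : z ∉ descend T r c) : j ∉ Jset T r U c := fun hJ =>
  hzc (U_subset_descend hT hdisj hUconn hiv hne' hJ hz)

include hT hne hchild hUconn in
theorem v_mem_U_of_both {j : Fin k} (h₁ : (U j ∩ descend T r v₁).Nonempty)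
    (h₂ : (U j ∩ descend T r v₂).Nonempty) : v ∈ U j := by
  obtain ⟨x, hxU, hxd⟩ := h₁
  obtain ⟨y, hyU, hyd⟩ := h₂
  obtain ⟨p, hp, hsup⟩ := conn_path hUconn hxU hyU
  exact hsup v (path_cross hT hne hchild hxd hyd p hp)

include hiv in
theorem iv_mem_J (u : V) : iv u ∈ Jset T r U u := ⟨u, hiv u, descend_self u⟩

theorem J_mono {c u : V} (hmem : c ∈ descend T r u) : Jset T r U c ⊆ Jset T r U u :=
  fun _ ⟨z, hz, hzd⟩ => ⟨z, hz, descend_mono hmem hzd⟩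

include hT hne hchild hdisj hiv in
theorem J_cases {j : Fin k} (hj : j ∈ Jset T r U v) :
    j = iv v ∨ j ∈ Jset T r U v₁ ∨ j ∈ Jset T r U v₂ := by
  obtain ⟨z, hz, hzd⟩ := hj
  rcases children_cover hT hchild hzd with rfl | h | h
  · exact Or.inl (eq_iv hdisj hiv hz)
  · exact Or.inr (Or.inl ⟨z, hz, h⟩)
  · exact Or.inr (Or.inr ⟨z, hz, h⟩)

include hT hne hchild hdisj hUconn hiv in
theorem J_not_both {j : Fin k} (hj₁ : j ∈ Jset T r U v₁) (hj₂ : j ∈ Jset T r U v₂) :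
    j = iv v :=
  eq_iv hdisj hiv (v_mem_U_of_both hT hne hchild hUconn hj₁ hj₂)

include hT hne hchild hdisj hUconn hiv in
theorem U_inter_descend_eq {j : Fin k} (hj₁ : j ∈ Jset T r U v₁) (hjv : j ≠ iv v) :
    U j ∩ descend T r v = U j ∩ descend T r v₁ := by
  have hmem₁ : v₁ ∈ descend T r v := ((hchild v₁).mpr (Or.inl rfl)).2
  apply Set.Subset.antisymm
  · rintro z ⟨hz, hzd⟩
    rcases children_cover hT hchild hzd with rfl | h | h
    · exact absurd (eq_iv hdisj hiv hz) hjv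
    · exact ⟨hz, h⟩
    · exact absurd (J_not_both hT hne hchild hdisj hUconn hiv hj₁ ⟨z, hz, h⟩) hjv
  · rintro z ⟨hz, hzd⟩
    exact ⟨hz, descend_mono hmem₁ hzd⟩

theorem set_eq_iff_pointwise {D Q : Set V} {P : V → Prop} :
    {u | u ∈ D ∧ P u} = Q ∩ D ↔ ∀ u ∈ D, (P u ↔ u ∈ Q) := by
  constructor
  · intro h u hu
    constructor
    · intro hp
      have : u ∈ Q ∩ D := h ▸ (⟨hu, hp⟩ : u ∈ {u | u ∈ D ∧ P u})
      exact this.1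
    · intro hq
      have : u ∈ {u | u ∈ D ∧ P u} := h.symm ▸ (⟨hq, hu⟩ : u ∈ Q ∩ D)
      exact this.2
  · intro h
    ext u
    simp only [Set.mem_setOf_eq, Set.mem_inter_iff]
    constructor
    · rintro ⟨hu, hp⟩
      exact ⟨(h u hu).1 hp, hu⟩
    · rintro ⟨hq, hu⟩
      exact ⟨hu, (h u hu).2 hq⟩

-- convenient abbreviations for hypotheses about a fixed combined witness
include hdisj hiv in
theorem cell_restrict {st : Fin k → V}
    (Hpt : ∀ j ∈ Jset T r U v, ∀ u ∈ descend T r v,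
      ((∀ t ∈ Jset T r U v, d (st j) u ≤ d (st t) u) ↔ u ∈ U j))
    {c : V} (hmemc : c ∈ descend T r v) {j : Fin k} (hj : j ∈ Jset T r U c)
    {u : V} (hu : u ∈ descend T r c)
    (hcomp : ∀ t ∈ Jset T r U c, d (st j) u ≤ d (st t) u) : u ∈ U j := by
  have hud : u ∈ descend T r v := descend_mono hmemc hu
  have hj' : iv u ∈ Jset T r U c := ⟨u, hiv u, hu⟩
  have hfull' : ∀ t ∈ Jset T r U v, d (st (iv u)) u ≤ d (st t) u :=
    (Hpt (iv u) (J_mono hmemc hj') u hud).mpr (hiv u)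
  refine (Hpt j (J_mono hmemc hj) u hud).mp (fun t ht => ?_)
  exact le_trans (hcomp (iv u) hj') (hfull' t ht)

-- the decomposition of membership of Bset according to the location of the site of v
include hT hne hchild hiv in
theorem Bset_loc {x : ℝ} :
    x ∈ Bset T r d U S iv v ↔
      ((∃ st : Fin k → V,
        (∀ j ∈ Jset T r U v, st j ∈ S j ∩ descend T r v) ∧
        (∀ j ∈ Jset T r U v,
          {u | u ∈ descend T r v ∧ ∀ t ∈ Jset T r U v, d (st j) u ≤ d (st t) u} =
            U j ∩ descend T r v) ∧
        x = d (st (iv v)) v ∧ st (iv v) = v) ∨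
      (∃ st : Fin k → V,
        (∀ j ∈ Jset T r U v, st j ∈ S j ∩ descend T r v) ∧
        (∀ j ∈ Jset T r U v,
          {u | u ∈ descend T r v ∧ ∀ t ∈ Jset T r U v, d (st j) u ≤ d (st t) u} =
            U j ∩ descend T r v) ∧
        x = d (st (iv v)) v ∧ st (iv v) ∈ descend T r v₁) ∨
      (∃ st : Fin k → V,
        (∀ j ∈ Jset T r U v, st j ∈ S j ∩ descend T r v) ∧
        (∀ j ∈ Jset T r U v,
          {u | u ∈ descend T r v ∧ ∀ t ∈ Jset T r U v, d (st j) u ≤ d (st t) u} =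
            U j ∩ descend T r v) ∧
        x = d (st (iv v)) v ∧ st (iv v) ∈ descend T r v₂)) := by
  constructor
  · rintro ⟨st, hst, hcell, hx⟩
    have hloc := (hst (iv v) (iv_mem_J hiv v)).2
    rcases children_cover hT hchild hloc with h | h | h
    · exact Or.inl ⟨st, hst, hcell, hx, h⟩
    · exact Or.inr (Or.inl ⟨st, hst, hcell, hx, h⟩)
    · exact Or.inr (Or.inr ⟨st, hst, hcell, hx, h⟩)
  · rintro (⟨st, hst, hcell, hx, -⟩ | ⟨st, hst, hcell, hx, -⟩ | ⟨st, hst, hcell, hx, -⟩) <;>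
      exact ⟨st, hst, hcell, hx⟩

include hT hw hd hne hchild hdisj hUconn hSU hiv in
theorem side_forward {x : ℝ}
    (hW : ∃ st : Fin k → V,
      (∀ j ∈ Jset T r U v, st j ∈ S j ∩ descend T r v) ∧
      (∀ j ∈ Jset T r U v,
        {u | u ∈ descend T r v ∧ ∀ t ∈ Jset T r U v, d (st j) u ≤ d (st t) u} =
          U j ∩ descend T r v) ∧
      x = d (st (iv v)) v ∧ st (iv v) ∈ descend T r v₁) :
    iv v = iv v₁ ∧ x ∈ Bshift T r w d U S iv v v₁ ∧
      (iv v = iv v₂ → x ∈ Ashift T r w d U S iv v v₂) ∧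
      (iv v ≠ iv v₂ → x ∈ Cshift T r w d U S iv v v₂) := by
  obtain ⟨st, hst, hcell, hx, hloc⟩ := hW
  have hchild' : ∀ c : V, (T.Adj v c ∧ c ∈ descend T r v) ↔ (c = v₂ ∨ c = v₁) :=
    fun c => (hchild c).trans or_comm
  have hadj₁ : T.Adj v v₁ := ((hchild v₁).mpr (Or.inl rfl)).1
  have hmem₁ : v₁ ∈ descend T r v := ((hchild v₁).mpr (Or.inl rfl)).2
  have hadj₂ : T.Adj v v₂ := ((hchild v₂).mpr (Or.inr rfl)).1
  have hmem₂ : v₂ ∈ descend T r v := ((hchild v₂).mpr (Or.inr rfl)).2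
  have hw₁ : 0 < w s(v, v₁) := hw _ (T.mem_edgeSet.mpr hadj₁)
  have hw₂ : 0 < w s(v, v₂) := hw _ (T.mem_edgeSet.mpr hadj₂)
  have hvd₁ : v ∉ descend T r v₁ := not_descend_antisym hT hmem₁ hadj₁.ne'
  have hvd₂ : v ∉ descend T r v₂ := not_descend_antisym hT hmem₂ hadj₂.ne'
  have Hpt : ∀ j ∈ Jset T r U v, ∀ u ∈ descend T r v,
      ((∀ t ∈ Jset T r U v, d (st j) u ≤ d (st t) u) ↔ u ∈ U j) :=
    fun j hj => set_eq_iff_pointwise.mp (hcell j hj)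
  have haJ : iv v ∈ Jset T r U v := iv_mem_J hiv v
  have hsa := hst _ haJ
  have haJ1 : iv v ∈ Jset T r U v₁ := ⟨st (iv v), hSU _ hsa.1, hloc⟩
  have aa₁ : iv v = iv v₁ := by
    by_contra hnee
    exact not_mem_J hT hdisj hUconn hiv hnee (hiv v) hvd₁ haJ1
  have hsite1 : ∀ j ∈ Jset T r U v₁, st j ∈ descend T r v₁ := by
    intro j hj
    by_cases hja : j = iv v
    · exact hja ▸ hloc
    · exact U_subset_descend hT hdisj hUconn hiv (fun h => hja (h.trans aa₁.symm)) hj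
        (hSU j (hst j (J_mono hmem₁ hj)).1)
  have hsite2 : ∀ j ∈ Jset T r U v₂, j ≠ iv v → st j ∈ descend T r v₂ := by
    intro j hj hja
    have hstj := hst j (J_mono hmem₂ hj)
    rcases children_cover hT hchild hstj.2 with h | h | h
    · exact absurd (h ▸ eq_iv hdisj hiv (hSU j hstj.1)) hja
    · exact absurd (J_not_both hT hne hchild hdisj hUconn hiv ⟨st j, hSU j hstj.1, h⟩ hj) hja
    · exact h
  have hxval : x = d (st (iv v)) v₁ + w s(v, v₁) :=
    hx.trans (d_child_parent hT hd hadj₁ hmem₁ hloc)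
  have hxnonneg : 0 ≤ x := hx ▸ d_nonneg hT hw hd _ _
  have Mv : ∀ t ∈ Jset T r U v, x ≤ d (st t) v := fun t ht =>
    hx ▸ ((Hpt _ haJ v (descend_self v)).mpr (hiv v) t ht)
  have hdcross : ∀ u ∈ descend T r v₂, d (st (iv v)) u = x + d v u := fun u hu => by
    rw [hx]; exact (d_cross hT hd hne hchild hloc hu).symm
  have hdv₂ : ∀ u ∈ descend T r v₂, d v u = w s(v, v₂) + d v₂ u :=
    fun u hu => d_parent hT hd hadj₂ hmem₂ hu
  have hdfar : ∀ t ∈ Jset T r U v₂, t ≠ iv v → ∀ u ∈ descend T r v,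
      d (st t) u = d (st t) v + d v u ∨ u ∈ descend T r v₂ := by
    intro t ht hta u hu
    rcases children_cover hT hchild hu with rfl | h | h
    · left; rw [d_self hd, add_zero]
    · left; exact (d_cross hT hd hne.symm hchild' (hsite2 t ht hta) h).symm
    · right; exact h
  refine ⟨aa₁, ⟨x - w s(v, v₁), ?_, by ring⟩, ?_, ?_⟩
  · -- B component
    refine ⟨st, ?_, ?_, ?_⟩
    · intro j hj; exact ⟨(hst j (J_mono hmem₁ hj)).1, hsite1 j hj⟩
    · intro j hj
      rw [set_eq_iff_pointwise]
      intro u hu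
      constructor
      · exact fun hcomp => cell_restrict hdisj hiv Hpt hmem₁ hj hu hcomp
      · intro huU t ht
        exact (Hpt j (J_mono hmem₁ hj) u (descend_mono hmem₁ hu)).mpr huU t (J_mono hmem₁ ht)
    · rw [← aa₁]; linarith
  · -- A component
    intro aa₂
    refine ⟨x + w s(v, v₂), ⟨by linarith, st, ?_, ?_, ?_⟩, by ring⟩
    · intro j hj hja
      exact (hst j (J_mono hmem₂ hj)).1
    · intro j hj hja
      have hja' : j ≠ iv v := fun h => hja (h ▸ aa₂)
      have hjv : j ∈ Jset T r U v := J_mono hmem₂ hj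
      rw [set_eq_iff_pointwise]
      intro u hu
      have hud : u ∈ descend T r v := descend_mono hmem₂ hu
      have hps : x + w s(v, v₂) + d v₂ u = d (st (iv v)) u := by
        rw [hdcross u hu, hdv₂ u hu]; ring
      constructor
      · rintro ⟨hcomp, hpseudo⟩
        rw [hps] at hpseudo
        by_cases hj0a : iv u = iv v₂
        · have huU : u ∈ U (iv v) := by rw [aa₂, ← hj0a]; exact hiv u
          have hfull := (Hpt (iv v) haJ u hud).mpr huU
          exact (Hpt j hjv u hud).mp (fun t ht => le_trans hpseudo (hfull t ht))
        · have hj0 : iv u ∈ Jset T r U v₂ := ⟨u, hiv u, hu⟩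
          have hfull := (Hpt (iv u) (J_mono hmem₂ hj0) u hud).mpr (hiv u)
          exact (Hpt j hjv u hud).mp
            (fun t ht => le_trans (hcomp (iv u) hj0 hj0a) (hfull t ht))
      · intro huU
        have hfull := (Hpt j hjv u hud).mpr huU
        refine ⟨fun t ht _ => hfull t (J_mono hmem₂ ht), ?_⟩
        rw [hps]
        exact hfull (iv v) haJ
    · rw [set_eq_iff_pointwise]
      intro u hu
      have hud : u ∈ descend T r v := descend_mono hmem₂ hu
      have hps : x + w s(v, v₂) + d v₂ u = d (st (iv v)) u := by
        rw [hdcross u hu, hdv₂ u hu]; ring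
      constructor
      · intro hpseudo
        by_cases hj0a : iv u = iv v₂
        · rw [← hj0a]; exact hiv u
        · have hj0 : iv u ∈ Jset T r U v₂ := ⟨u, hiv u, hu⟩
          have hfull := (Hpt (iv u) (J_mono hmem₂ hj0) u hud).mpr (hiv u)
          have h1 : d (st (iv u)) u ≤ d (st (iv v)) u := hfull (iv v) haJ
          have h2 : d (st (iv v)) u ≤ d (st (iv u)) u := by
            rw [← hps]; exact hpseudo (iv u) hj0 hj0a
          have huU : u ∈ U (iv v) :=
            (Hpt (iv v) haJ u hud).mp (fun t ht => (le_antisymm h2 h1) ▸ hfull t ht)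
          rw [← aa₂]; exact huU
      · intro huU
        have huU' : u ∈ U (iv v) := by rw [aa₂]; exact huU
        have hfull := (Hpt (iv v) haJ u hud).mpr huU'
        intro t ht hta
        rw [hps]
        exact hfull t (J_mono hmem₂ ht)
  · -- C component
    intro haa₂
    have ha2J : iv v ∉ Jset T r U v₂ := not_mem_J hT hdisj hUconn hiv haa₂ (hiv v) hvd₂
    have hiv2J : iv v₂ ∈ Jset T r U v₂ := iv_mem_J hiv v₂
    have hsite2' : ∀ j ∈ Jset T r U v₂, st j ∈ descend T r v₂ := fun j hj =>
      hsite2 j hj (fun h => ha2J (h ▸ hj))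
    have hB2 : d (st (iv v₂)) v₂ ∈ Bset T r d U S iv v₂ := by
      refine ⟨st, ?_, ?_, rfl⟩
      · intro j hj; exact ⟨(hst j (J_mono hmem₂ hj)).1, hsite2' j hj⟩
      · intro j hj
        rw [set_eq_iff_pointwise]
        intro u hu
        constructor
        · exact fun hcomp => cell_restrict hdisj hiv Hpt hmem₂ hj hu hcomp
        · intro huU t ht
          exact (Hpt j (J_mono hmem₂ hj) u (descend_mono hmem₂ hu)).mpr huU t (J_mono hmem₂ ht)
    have hd2v : d (st (iv v₂)) v = d (st (iv v₂)) v₂ + w s(v, v₂) :=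
      d_child_parent hT hd hadj₂ hmem₂ (hsite2' _ hiv2J)
    have hdav2 : d (st (iv v)) v₂ = x + w s(v, v₂) := by
      rw [hdcross v₂ (descend_self v₂), hdv₂ v₂ (descend_self v₂), d_self hd]; ring
    -- y ≤ x + w₂ and strict
    have hfull2 := (Hpt (iv v₂) (J_mono hmem₂ hiv2J) v₂ hmem₂).mpr (hiv v₂)
    have hy_le : d (st (iv v₂)) v₂ ≤ x + w s(v, v₂) := by
      have := hfull2 (iv v) haJ
      rwa [hdav2] at this
    have hy_lt : d (st (iv v₂)) v₂ < x + w s(v, v₂) := by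
      rcases lt_or_eq_of_le hy_le with h | h
      · exact h
      · exfalso
        have hv2U : v₂ ∈ U (iv v) := (Hpt (iv v) haJ v₂ hmem₂).mp (fun t ht => by
          rw [hdav2, ← h]; exact hfull2 t ht)
        exact haa₂ (eq_iv hdisj hiv hv2U)
    -- x ≤ y + w₂ and strict
    have hx_le : x ≤ d (st (iv v₂)) v₂ + w s(v, v₂) := by
      have := Mv (iv v₂) (J_mono hmem₂ hiv2J)
      rwa [hd2v] at this
    have hx_lt : x < d (st (iv v₂)) v₂ + w s(v, v₂) := by
      rcases lt_or_eq_of_le hx_le with h | h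
      · exact h
      · exfalso
        have hvU : v ∈ U (iv v₂) :=
          (Hpt (iv v₂) (J_mono hmem₂ hiv2J) v (descend_self v)).mp (fun t ht => by
            rw [← hd2v] at h
            rw [← h]; exact Mv t ht)
        exact haa₂ ((eq_iv hdisj hiv hvU).symm)
    exact ⟨d (st (iv v₂)) v₂, hB2, by linarith, by linarith⟩

include hT hw hd hne hchild hdisj hUconn hSU hiv in
theorem chi_child {st : Fin k → V}
    (hst : ∀ j ∈ Jset T r U v, st j ∈ S j ∩ descend T r v)
    (hcell : ∀ j ∈ Jset T r U v,
      {u | u ∈ descend T r v ∧ ∀ t ∈ Jset T r U v, d (st j) u ≤ d (st t) u} =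
        U j ∩ descend T r v)
    (hloc : st (iv v) = v) :
    (iv v = iv v₁ → (0 : ℝ) ∈ Ashift T r w d U S iv v v₁) ∧
    (iv v ≠ iv v₁ → (0 : ℝ) ∈ Cshift T r w d U S iv v v₁) := by
  have hadj₁ : T.Adj v v₁ := ((hchild v₁).mpr (Or.inl rfl)).1
  have hmem₁ : v₁ ∈ descend T r v := ((hchild v₁).mpr (Or.inl rfl)).2
  have hw₁ : 0 < w s(v, v₁) := hw _ (T.mem_edgeSet.mpr hadj₁)
  have hvd₁ : v ∉ descend T r v₁ := not_descend_antisym hT hmem₁ hadj₁.ne'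
  have Hpt : ∀ j ∈ Jset T r U v, ∀ u ∈ descend T r v,
      ((∀ t ∈ Jset T r U v, d (st j) u ≤ d (st t) u) ↔ u ∈ U j) :=
    fun j hj => set_eq_iff_pointwise.mp (hcell j hj)
  have haJ : iv v ∈ Jset T r U v := iv_mem_J hiv v
  have Mv : ∀ t ∈ Jset T r U v, (0 : ℝ) ≤ d (st t) v := fun t ht => by
    have := (Hpt _ haJ v (descend_self v)).mpr (hiv v) t ht
    rwa [hloc, d_self hd] at this
  have hsite1 : ∀ j ∈ Jset T r U v₁, j ≠ iv v → st j ∈ descend T r v₁ := by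
    intro j hj hja
    have hstj := hst j (J_mono hmem₁ hj)
    rcases children_cover hT hchild hstj.2 with h | h | h
    · exact absurd (h ▸ eq_iv hdisj hiv (hSU j hstj.1)) hja
    · exact h
    · exact absurd (J_not_both hT hne hchild hdisj hUconn hiv hj ⟨st j, hSU j hstj.1, h⟩) hja
  constructor
  · -- A component
    intro aa₁
    refine ⟨w s(v, v₁), ⟨hw₁, st, ?_, ?_, ?_⟩, by ring⟩
    · intro j hj hja
      exact (hst j (J_mono hmem₁ hj)).1
    · intro j hj hja
      have hja' : j ≠ iv v := fun h => hja (h ▸ aa₁)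
      have hjv : j ∈ Jset T r U v := J_mono hmem₁ hj
      rw [set_eq_iff_pointwise]
      intro u hu
      have hud : u ∈ descend T r v := descend_mono hmem₁ hu
      have hps : w s(v, v₁) + d v₁ u = d (st (iv v)) u := by
        rw [hloc]; exact (d_parent hT hd hadj₁ hmem₁ hu).symm
      constructor
      · rintro ⟨hcomp, hpseudo⟩
        rw [hps] at hpseudo
        by_cases hj0a : iv u = iv v₁
        · have huU : u ∈ U (iv v) := by rw [aa₁, ← hj0a]; exact hiv u
          have hfull := (Hpt (iv v) haJ u hud).mpr huU
          exact (Hpt j hjv u hud).mp (fun t ht => le_trans hpseudo (hfull t ht))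
        · have hj0 : iv u ∈ Jset T r U v₁ := ⟨u, hiv u, hu⟩
          have hfull := (Hpt (iv u) (J_mono hmem₁ hj0) u hud).mpr (hiv u)
          exact (Hpt j hjv u hud).mp
            (fun t ht => le_trans (hcomp (iv u) hj0 hj0a) (hfull t ht))
      · intro huU
        have hfull := (Hpt j hjv u hud).mpr huU
        refine ⟨fun t ht _ => hfull t (J_mono hmem₁ ht), ?_⟩
        rw [hps]
        exact hfull (iv v) haJ
    · rw [set_eq_iff_pointwise]
      intro u hu
      have hud : u ∈ descend T r v := descend_mono hmem₁ hu
      have hps : w s(v, v₁) + d v₁ u = d (st (iv v)) u := by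
        rw [hloc]; exact (d_parent hT hd hadj₁ hmem₁ hu).symm
      constructor
      · intro hpseudo
        by_cases hj0a : iv u = iv v₁
        · rw [← hj0a]; exact hiv u
        · have hj0 : iv u ∈ Jset T r U v₁ := ⟨u, hiv u, hu⟩
          have hfull := (Hpt (iv u) (J_mono hmem₁ hj0) u hud).mpr (hiv u)
          have h1 : d (st (iv u)) u ≤ d (st (iv v)) u := hfull (iv v) haJ
          have h2 : d (st (iv v)) u ≤ d (st (iv u)) u := by
            rw [← hps]; exact hpseudo (iv u) hj0 hj0a
          have huU : u ∈ U (iv v) :=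
            (Hpt (iv v) haJ u hud).mp (fun t ht => (le_antisymm h2 h1) ▸ hfull t ht)
          rw [← aa₁]; exact huU
      · intro huU
        have huU' : u ∈ U (iv v) := by rw [aa₁]; exact huU
        have hfull := (Hpt (iv v) haJ u hud).mpr huU'
        intro t ht hta
        rw [hps]
        exact hfull t (J_mono hmem₁ ht)
  · -- C component
    intro haa₁
    have ha1J : iv v ∉ Jset T r U v₁ := not_mem_J hT hdisj hUconn hiv haa₁ (hiv v) hvd₁
    have hiv1J : iv v₁ ∈ Jset T r U v₁ := iv_mem_J hiv v₁
    have hsite1' : ∀ j ∈ Jset T r U v₁, st j ∈ descend T r v₁ := fun j hj =>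
      hsite1 j hj (fun h => ha1J (h ▸ hj))
    have hB1 : d (st (iv v₁)) v₁ ∈ Bset T r d U S iv v₁ := by
      refine ⟨st, ?_, ?_, rfl⟩
      · intro j hj; exact ⟨(hst j (J_mono hmem₁ hj)).1, hsite1' j hj⟩
      · intro j hj
        rw [set_eq_iff_pointwise]
        intro u hu
        constructor
        · exact fun hcomp => cell_restrict hdisj hiv Hpt hmem₁ hj hu hcomp
        · intro huU t ht
          exact (Hpt j (J_mono hmem₁ hj) u (descend_mono hmem₁ hu)).mpr huU t (J_mono hmem₁ ht)
    have hdav1 : d (st (iv v)) v₁ = w s(v, v₁) := by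
      rw [hloc]; exact d_adj hd hadj₁
    have hfull1 := (Hpt (iv v₁) (J_mono hmem₁ hiv1J) v₁ hmem₁).mpr (hiv v₁)
    have hy_le : d (st (iv v₁)) v₁ ≤ w s(v, v₁) := by
      have := hfull1 (iv v) haJ
      rwa [hdav1] at this
    have hy_lt : d (st (iv v₁)) v₁ < w s(v, v₁) := by
      rcases lt_or_eq_of_le hy_le with h | h
      · exact h
      · exfalso
        have hv1U : v₁ ∈ U (iv v) := (Hpt (iv v) haJ v₁ hmem₁).mp (fun t ht => by
          rw [hdav1, ← h]; exact hfull1 t ht)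
        exact haa₁ (eq_iv hdisj hiv hv1U)
    have hynn : 0 ≤ d (st (iv v₁)) v₁ := d_nonneg hT hw hd _ _
    exact ⟨d (st (iv v₁)) v₁, hB1, by linarith, by linarith⟩

include hT hw hd hne hchild hdisj hUconn hSU hiv in
theorem chi_forward {x : ℝ}
    (hW : ∃ st : Fin k → V,
      (∀ j ∈ Jset T r U v, st j ∈ S j ∩ descend T r v) ∧
      (∀ j ∈ Jset T r U v,
        {u | u ∈ descend T r v ∧ ∀ t ∈ Jset T r U v, d (st j) u ≤ d (st t) u} =
          U j ∩ descend T r v) ∧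
      x = d (st (iv v)) v ∧ st (iv v) = v) :
    x ∈ chiSet T r w d U S iv v v₁ v₂ := by
  obtain ⟨st, hst, hcell, hx, hloc⟩ := hW
  have hchild' : ∀ c : V, (T.Adj v c ∧ c ∈ descend T r v) ↔ (c = v₂ ∨ c = v₁) :=
    fun c => (hchild c).trans or_comm
  have h1 := chi_child hT hw hd hne hchild hdisj hUconn hSU hiv hst hcell hloc
  have h2 := chi_child hT hw hd hne.symm hchild' hdisj hUconn hSU hiv hst hcell hloc
  have hx0 : x = 0 := by rw [hx, hloc, d_self hd]
  have hvS : v ∈ S (iv v) := by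
    have := (hst (iv v) (iv_mem_J hiv v)).1
    rwa [hloc] at this
  exact ⟨hx0, hvS, h1.1, h1.2, h2.1, h2.2⟩

include hT hd hne hchild hdisj hUconn hiv in
theorem far_pointwise {x : ℝ} {st st₂ : Fin k → V}
    (hfar_eq : ∀ u ∈ descend T r v₂, d (st (iv v)) u = x + d v u)
    (hsteq : ∀ t ∈ Jset T r U v₂, t ≠ iv v → st t = st₂ t)
    (F2 : ∀ j ∈ Jset T r U v₂, j ≠ iv v → ∀ u ∈ descend T r v₂,
      (((∀ t ∈ Jset T r U v₂, t ≠ iv v → d (st₂ j) u ≤ d (st₂ t) u) ∧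
        d (st₂ j) u ≤ x + d v u) ↔ u ∈ U j))
    (F3 : ∀ u ∈ descend T r v₂,
      ((∀ t ∈ Jset T r U v₂, t ≠ iv v → x + d v u ≤ d (st₂ t) u) ↔ u ∈ U (iv v)))
    (Hoth : ∀ t ∈ Jset T r U v, t ∉ Jset T r U v₂ → t ≠ iv v → ∀ u ∈ descend T r v₂,
      x + d v u < d (st t) u)
    {u : V} (hu : u ∈ descend T r v₂) {j : Fin k} (hj : j ∈ Jset T r U v) :
    (∀ t ∈ Jset T r U v, d (st j) u ≤ d (st t) u) ↔ u ∈ U j := by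
  have hmem₂ : v₂ ∈ descend T r v := ((hchild v₂).mpr (Or.inr rfl)).2
  constructor
  · intro hfull
    by_cases hja : j = iv v
    · subst hja
      exact (F3 u hu).mp (fun t ht hta => by
        rw [← hfar_eq u hu, ← hsteq t ht hta]
        exact hfull t (J_mono hmem₂ ht))
    · by_cases hj2 : j ∈ Jset T r U v₂
      · refine (F2 j hj2 hja u hu).mp ⟨fun t ht hta => ?_, ?_⟩
        · rw [← hsteq j hj2 hja, ← hsteq t ht hta]
          exact hfull t (J_mono hmem₂ ht)
        · rw [← hsteq j hj2 hja, ← hfar_eq u hu]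
          exact hfull (iv v) (iv_mem_J hiv v)
      · exfalso
        have hstrict : x + d v u < d (st j) u := Hoth j hj hj2 hja u hu
        have hle : d (st (iv u)) u ≤ x + d v u := by
          by_cases hua : iv u = iv v
          · rw [hua, hfar_eq u hu]
          · have hj0 : iv u ∈ Jset T r U v₂ := ⟨u, hiv u, hu⟩
            have := ((F2 (iv u) hj0 hua u hu).mpr (hiv u)).2
            rwa [← hsteq (iv u) hj0 hua] at this
        have := hfull (iv u) (J_mono hmem₂ ⟨u, hiv u, hu⟩)
        linarith
  · intro huU
    by_cases hja : j = iv v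
    · subst hja
      have hlow := (F3 u hu).mpr huU
      intro t ht
      by_cases hta : t = iv v
      · subst hta; exact le_refl _
      · by_cases ht2 : t ∈ Jset T r U v₂
        · rw [hfar_eq u hu, hsteq t ht2 hta]
          exact hlow t ht2 hta
        · exact le_of_lt (by rw [hfar_eq u hu]; exact Hoth t ht ht2 hta u hu)
    · have hj2 : j ∈ Jset T r U v₂ := ⟨u, huU, hu⟩
      obtain ⟨tpart, pseudo⟩ := (F2 j hj2 hja u hu).mpr huU
      intro t ht
      by_cases hta : t = iv v
      · subst hta
        rw [hfar_eq u hu, hsteq j hj2 hja]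
        exact pseudo
      · by_cases ht2 : t ∈ Jset T r U v₂
        · rw [hsteq j hj2 hja, hsteq t ht2 hta]
          exact tpart t ht2 hta
        · calc d (st j) u ≤ x + d v u := by rw [hsteq j hj2 hja]; exact pseudo
            _ ≤ d (st t) u := (Hoth t ht ht2 hta u hu).le

include hT hw hd hne hchild hdisj hUconn hSU hiv in
theorem far_package {x : ℝ} (hx0 : 0 ≤ x)
    (hA : iv v = iv v₁ → x ∈ Ashift T r w d U S iv v v₁)
    (hC : iv v ≠ iv v₁ → x ∈ Cshift T r w d U S iv v v₁) :
    ∃ st₁ : Fin k → V,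
      (∀ j ∈ Jset T r U v₁, j ≠ iv v → st₁ j ∈ S j ∩ descend T r v₁) ∧
      (∀ j ∈ Jset T r U v₁, j ≠ iv v → ∀ u ∈ descend T r v₁,
        (((∀ t ∈ Jset T r U v₁, t ≠ iv v → d (st₁ j) u ≤ d (st₁ t) u) ∧
          d (st₁ j) u ≤ x + d v u) ↔ u ∈ U j)) ∧
      (∀ u ∈ descend T r v₁,
        ((∀ t ∈ Jset T r U v₁, t ≠ iv v → x + d v u ≤ d (st₁ t) u) ↔ u ∈ U (iv v))) ∧
      (∀ t ∈ Jset T r U v₁, t ≠ iv v → x < d (st₁ t) v) := by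
  have hadj₁ : T.Adj v v₁ := ((hchild v₁).mpr (Or.inl rfl)).1
  have hmem₁ : v₁ ∈ descend T r v := ((hchild v₁).mpr (Or.inl rfl)).2
  have hw₁ : 0 < w s(v, v₁) := hw _ (T.mem_edgeSet.mpr hadj₁)
  have hvd₁ : v ∉ descend T r v₁ := not_descend_antisym hT hmem₁ hadj₁.ne'
  have hdvu : ∀ u ∈ descend T r v₁, d v u = w s(v, v₁) + d v₁ u :=
    fun u hu => d_parent hT hd hadj₁ hmem₁ hu
  have hdvv₁ : d v v₁ = w s(v, v₁) := d_adj hd hadj₁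
  by_cases haa : iv v = iv v₁
  · obtain ⟨α, ⟨hαpos, st₁, hsts, hcells, hpseudo⟩, hxeq⟩ := hA haa
    have hα : α = x + w s(v, v₁) := by rw [hxeq]; ring
    have hne' : ∀ j : Fin k, j ≠ iv v → j ≠ iv v₁ := fun j hja h => hja (h.trans haa.symm)
    have hne'' : ∀ j : Fin k, j ≠ iv v₁ → j ≠ iv v := fun j hja h => hja (h.symm ▸ haa)
    have hsite : ∀ j ∈ Jset T r U v₁, j ≠ iv v → st₁ j ∈ descend T r v₁ := fun j hj hja =>
      U_subset_descend hT hdisj hUconn hiv (hne' j hja) hj (hSU j (hsts j hj (hne' j hja)))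
    have hps : ∀ u ∈ descend T r v₁, α + d v₁ u = x + d v u := by
      intro u hu; rw [hα, hdvu u hu]; ring
    have F2 : ∀ j ∈ Jset T r U v₁, j ≠ iv v → ∀ u ∈ descend T r v₁,
        (((∀ t ∈ Jset T r U v₁, t ≠ iv v → d (st₁ j) u ≤ d (st₁ t) u) ∧
          d (st₁ j) u ≤ x + d v u) ↔ u ∈ U j) := by
      intro j hj hja u hu
      have hpt := set_eq_iff_pointwise.mp (hcells j hj (hne' j hja)) u hu
      constructor
      · rintro ⟨h1, h2⟩
        exact hpt.mp ⟨fun t ht hta => h1 t ht (hne'' t hta), by rw [hps u hu]; exact h2⟩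
      · intro huU
        obtain ⟨h1, h2⟩ := hpt.mpr huU
        exact ⟨fun t ht hta => h1 t ht (hne' t hta), by rw [← hps u hu]; exact h2⟩
    have F3 : ∀ u ∈ descend T r v₁,
        ((∀ t ∈ Jset T r U v₁, t ≠ iv v → x + d v u ≤ d (st₁ t) u) ↔ u ∈ U (iv v)) := by
      intro u hu
      have hpt := set_eq_iff_pointwise.mp hpseudo u hu
      rw [← haa] at hpt
      constructor
      · intro h
        exact hpt.mp (fun t ht hta => by rw [hps u hu]; exact h t ht hta)
      · intro huU t ht hta
        rw [← hps u hu]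
        exact hpt.mpr huU t ht hta
    refine ⟨st₁, fun j hj hja => ⟨hsts j hj (hne' j hja), hsite j hj hja⟩, F2, F3, ?_⟩
    intro t ht hta
    have h1 : x + d v v₁ ≤ d (st₁ t) v₁ :=
      (F3 v₁ (descend_self v₁)).mpr (haa ▸ hiv v₁) t ht hta
    have h2 : d (st₁ t) v = d (st₁ t) v₁ + w s(v, v₁) :=
      d_child_parent hT hd hadj₁ hmem₁ (hsite t ht hta)
    rw [hdvv₁] at h1
    linarith
  · obtain ⟨y, ⟨st₁, hsts, hcells, hyval⟩, hy1, hy2⟩ := hC haa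
    have hanotJ : iv v ∉ Jset T r U v₁ := not_mem_J hT hdisj hUconn hiv haa (hiv v) hvd₁
    have hneJ : ∀ t ∈ Jset T r U v₁, t ≠ iv v := fun t ht h => hanotJ (h ▸ ht)
    have C1 : ∀ j ∈ Jset T r U v₁, ∀ u ∈ descend T r v₁,
        ((∀ t ∈ Jset T r U v₁, d (st₁ j) u ≤ d (st₁ t) u) ↔ u ∈ U j) :=
      fun j hj => set_eq_iff_pointwise.mp (hcells j hj)
    have hiv1J : iv v₁ ∈ Jset T r U v₁ := iv_mem_J hiv v₁
    have ylb : ∀ t ∈ Jset T r U v₁, y ≤ d (st₁ t) v₁ := by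
      intro t ht
      have := (C1 (iv v₁) hiv1J v₁ (descend_self v₁)).mpr (hiv v₁) t ht
      rwa [← hyval] at this
    have htri : ∀ u ∈ descend T r v₁, ∀ j ∈ Jset T r U v₁,
        d (st₁ j) u ≤ y + d v₁ u → d (st₁ j) u < x + d v u := by
      intro u hu j hj h
      rw [hdvu u hu]
      linarith
    have hivtri : ∀ u : V, d (st₁ (iv v₁)) u ≤ y + d v₁ u := by
      intro u
      rw [hyval]
      exact d_triangle hT hw hd _ v₁ u
    have F2 : ∀ j ∈ Jset T r U v₁, j ≠ iv v → ∀ u ∈ descend T r v₁,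
        (((∀ t ∈ Jset T r U v₁, t ≠ iv v → d (st₁ j) u ≤ d (st₁ t) u) ∧
          d (st₁ j) u ≤ x + d v u) ↔ u ∈ U j) := by
      intro j hj _ u hu
      constructor
      · rintro ⟨h1, -⟩
        exact (C1 j hj u hu).mp (fun t ht => h1 t ht (hneJ t ht))
      · intro huU
        have h1 := (C1 j hj u hu).mpr huU
        refine ⟨fun t ht _ => h1 t ht, ?_⟩
        exact le_of_lt (htri u hu j hj (le_trans (h1 (iv v₁) hiv1J) (hivtri u)))
    have F3 : ∀ u ∈ descend T r v₁,
        ((∀ t ∈ Jset T r U v₁, t ≠ iv v → x + d v u ≤ d (st₁ t) u) ↔ u ∈ U (iv v)) := by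
      intro u hu
      constructor
      · intro h
        exfalso
        have h1 := h (iv v₁) hiv1J (hneJ _ hiv1J)
        have h2 := htri u hu (iv v₁) hiv1J (hivtri u)
        linarith
      · intro huU
        exact absurd (⟨u, huU, hu⟩ : (U (iv v) ∩ descend T r v₁).Nonempty) hanotJ
    refine ⟨st₁, fun j hj hja => hsts j hj, F2, F3, ?_⟩
    intro t ht hta
    have h2 : d (st₁ t) v = d (st₁ t) v₁ + w s(v, v₁) :=
      d_child_parent hT hd hadj₁ hmem₁ (hsts t ht).2
    have := ylb t ht
    linarith
include hT hw hd hne hchild hdisj hUconn hSU hiv in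
theorem combine_side {x : ℝ}
    (aa₁ : iv v = iv v₁)
    (hB : x ∈ Bshift T r w d U S iv v v₁)
    (hA : iv v = iv v₂ → x ∈ Ashift T r w d U S iv v v₂)
    (hC : iv v ≠ iv v₂ → x ∈ Cshift T r w d U S iv v v₂) :
    x ∈ Bset T r d U S iv v := by
  classical
  have hchild' : ∀ c : V, (T.Adj v c ∧ c ∈ descend T r v) ↔ (c = v₂ ∨ c = v₁) :=
    fun c => (hchild c).trans or_comm
  have hadj₁ : T.Adj v v₁ := ((hchild v₁).mpr (Or.inl rfl)).1
  have hmem₁ : v₁ ∈ descend T r v := ((hchild v₁).mpr (Or.inl rfl)).2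
  have hadj₂ : T.Adj v v₂ := ((hchild v₂).mpr (Or.inr rfl)).1
  have hmem₂ : v₂ ∈ descend T r v := ((hchild v₂).mpr (Or.inr rfl)).2
  have hw₁ : 0 < w s(v, v₁) := hw _ (T.mem_edgeSet.mpr hadj₁)
  obtain ⟨y, ⟨st₁, hsts₁, hcells₁, hyval⟩, hxy⟩ := hB
  have hy0 : 0 ≤ y := hyval ▸ d_nonneg hT hw hd _ _
  have hx0 : 0 ≤ x := by rw [hxy]; linarith
  obtain ⟨st₂, F1₂, F2₂, F3₂, F4₂⟩ :=
    far_package hT hw hd hne.symm hchild' hdisj hUconn hSU hiv hx0 hA hC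
  set st : Fin k → V := fun j => if j ∈ Jset T r U v₁ then st₁ j else st₂ j with hst_def
  have hstv1 : ∀ j ∈ Jset T r U v₁, st j = st₁ j := fun j hj => if_pos hj
  have haJ1 : iv v ∈ Jset T r U v₁ := by rw [aa₁]; exact iv_mem_J hiv v₁
  have hstv2 : ∀ j ∈ Jset T r U v₂, j ≠ iv v → st j = st₂ j := by
    intro j hj hja
    exact if_neg (fun h => hja (J_not_both hT hne hchild hdisj hUconn hiv h hj))
  have hJres : ∀ j ∈ Jset T r U v, j ∉ Jset T r U v₁ → j ∈ Jset T r U v₂ ∧ j ≠ iv v := by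
    intro j hj hj1
    have hja : j ≠ iv v := fun he => hj1 (he ▸ haJ1)
    rcases J_cases hT hne hchild hdisj hiv hj with he | h1 | h2
    · exact absurd he hja
    · exact absurd h1 hj1
    · exact ⟨h2, hja⟩
  have hloc : st (iv v) ∈ descend T r v₁ := by
    rw [hstv1 _ haJ1]; exact (hsts₁ (iv v) haJ1).2
  have hyval' : y = d (st₁ (iv v)) v₁ := by rw [aa₁]; exact hyval
  have hsv : d (st (iv v)) v = x := by
    rw [hstv1 _ haJ1, d_child_parent hT hd hadj₁ hmem₁ (hsts₁ (iv v) haJ1).2, ← hyval', hxy]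
  have C1 : ∀ j ∈ Jset T r U v₁, ∀ u ∈ descend T r v₁,
      ((∀ t ∈ Jset T r U v₁, d (st₁ j) u ≤ d (st₁ t) u) ↔ u ∈ U j) :=
    fun j hj => set_eq_iff_pointwise.mp (hcells₁ j hj)
  have hiv1J : iv v₁ ∈ Jset T r U v₁ := iv_mem_J hiv v₁
  have ylb : ∀ t ∈ Jset T r U v₁, y ≤ d (st₁ t) v₁ := by
    intro t ht
    have := (C1 (iv v₁) hiv1J v₁ (descend_self v₁)).mpr (hiv v₁) t ht
    rwa [← hyval] at this
  have Ht1 : ∀ t ∈ Jset T r U v₁, x ≤ d (st t) v := by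
    intro t ht
    rw [hstv1 t ht, d_child_parent hT hd hadj₁ hmem₁ (hsts₁ t ht).2, hxy]
    have := ylb t ht
    linarith
  have Ht1s : ∀ t ∈ Jset T r U v₁, t ≠ iv v → x < d (st t) v := by
    intro t ht hta
    have hylt : y < d (st₁ t) v₁ := by
      rcases lt_or_eq_of_le (ylb t ht) with hlt | heq
      · exact hlt
      · exfalso
        have : v₁ ∈ U t := (C1 t ht v₁ (descend_self v₁)).mp (fun t' ht' => by
          rw [← heq]; exact ylb t' ht')
        exact hta ((eq_iv hdisj hiv this).trans aa₁.symm)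
    rw [hstv1 t ht, d_child_parent hT hd hadj₁ hmem₁ (hsts₁ t ht).2, hxy]
    linarith
  have Ht2s : ∀ t ∈ Jset T r U v₂, t ≠ iv v → x < d (st t) v := by
    intro t ht hta
    rw [hstv2 t ht hta]
    exact F4₂ t ht hta
  have Mv : ∀ t ∈ Jset T r U v, x ≤ d (st t) v := by
    intro t ht
    by_cases ht1 : t ∈ Jset T r U v₁
    · exact Ht1 t ht1
    · obtain ⟨ht2, hta⟩ := hJres t ht ht1
      exact (Ht2s t ht2 hta).le
  have hcross : ∀ u ∈ descend T r v₂, d (st (iv v)) u = x + d v u := by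
    intro u hu
    have := d_cross hT hd hne hchild hloc hu
    rw [hsv] at this
    exact this.symm
  have htri : ∀ u : V, d (st (iv v)) u ≤ x + d v u := fun u => by
    rw [← hsv]; exact d_triangle hT hw hd _ v u
  have Hoth : ∀ t ∈ Jset T r U v, t ∉ Jset T r U v₂ → t ≠ iv v →
      ∀ u ∈ descend T r v₂, x + d v u < d (st t) u := by
    intro t ht ht2 hta u hu
    have ht1 : t ∈ Jset T r U v₁ := by
      rcases J_cases hT hne hchild hdisj hiv ht with he | h1 | h2
      · exact absurd he hta
      · exact h1
      · exact absurd h2 ht2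
    have heq : d (st t) u = d (st t) v + d v u := by
      conv_lhs => rw [hstv1 t ht1]
      rw [← d_cross hT hd hne hchild (hsts₁ t ht1).2 hu, hstv1 t ht1]
    have := Ht1s t ht1 hta
    linarith
  refine ⟨st, ?_, ?_, hsv.symm⟩
  · intro j hj
    by_cases hj1 : j ∈ Jset T r U v₁
    · rw [hstv1 j hj1]
      exact ⟨(hsts₁ j hj1).1, descend_mono hmem₁ (hsts₁ j hj1).2⟩
    · obtain ⟨hj2, hja⟩ := hJres j hj hj1
      rw [hstv2 j hj2 hja]
      exact ⟨(F1₂ j hj2 hja).1, descend_mono hmem₂ (F1₂ j hj2 hja).2⟩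
  · intro j hj
    rw [set_eq_iff_pointwise]
    intro u hu
    rcases children_cover hT hchild hu with heq | h | h
    · obtain rfl := heq.symm
      constructor
      · intro hfull
        by_cases hja : j = iv v
        · rw [hja]; exact hiv v
        · exfalso
          have h1 : d (st j) v ≤ x := by
            rw [← hsv]; exact hfull (iv v) (iv_mem_J hiv v)
          by_cases hj1 : j ∈ Jset T r U v₁
          · exact absurd h1 (not_le.mpr (Ht1s j hj1 hja))
          · obtain ⟨hj2, -⟩ := hJres j hj hj1
            exact absurd h1 (not_le.mpr (Ht2s j hj2 hja))
      · intro huU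
        have hja : j = iv v := eq_iv hdisj hiv huU
        intro t ht
        rw [hja, hsv]
        exact Mv t ht
    · constructor
      · intro hfull
        by_cases hj1 : j ∈ Jset T r U v₁
        · refine (C1 j hj1 u h).mp (fun t ht => ?_)
          rw [← hstv1 j hj1, ← hstv1 t ht]
          exact hfull t (J_mono hmem₁ ht)
        · exfalso
          obtain ⟨hj2, hja⟩ := hJres j hj hj1
          have hfareq : d (st j) u = d (st j) v + d v u := by
            conv_lhs => rw [hstv2 j hj2 hja]
            rw [← d_cross hT hd hne.symm hchild' (F1₂ j hj2 hja).2 h, hstv2 j hj2 hja]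
          have hj0 : iv u ∈ Jset T r U v₁ := ⟨u, hiv u, h⟩
          have h2 : d (st (iv u)) u ≤ d (st (iv v)) u := by
            rw [hstv1 _ hj0, hstv1 _ haJ1]
            exact (C1 (iv u) hj0 u h).mpr (hiv u) (iv v) haJ1
          have h3 := htri u
          have h4 := Ht2s j hj2 hja
          have h5 := hfull (iv u) (J_mono hmem₁ hj0)
          linarith
      · intro huU
        have hj1 : j ∈ Jset T r U v₁ := ⟨u, huU, h⟩
        intro t ht
        by_cases ht1 : t ∈ Jset T r U v₁
        · rw [hstv1 j hj1, hstv1 t ht1]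
          exact (C1 j hj1 u h).mpr huU t ht1
        · obtain ⟨ht2, hta⟩ := hJres t ht ht1
          have h1 : d (st j) u ≤ d (st (iv v)) u := by
            rw [hstv1 j hj1, hstv1 _ haJ1]
            exact (C1 j hj1 u h).mpr huU (iv v) haJ1
          have h2 : d (st t) u = d (st t) v + d v u := by
            conv_lhs => rw [hstv2 t ht2 hta]
            rw [← d_cross hT hd hne.symm hchild' (F1₂ t ht2 hta).2 h, hstv2 t ht2 hta]
          have h3 := htri u
          have h4 := (Ht2s t ht2 hta).le
          linarith
    · exact far_pointwise hT hd hne hchild hdisj hUconn hiv hcross hstv2 F2₂ F3₂ Hoth h hj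

include hT hw hd hne hchild hdisj hUconn hSU hiv in
theorem chi_backward {x : ℝ} (hx : x ∈ chiSet T r w d U S iv v v₁ v₂) :
    x ∈ Bset T r d U S iv v := by
  classical
  obtain ⟨hx0, hvS, hA1, hC1, hA2, hC2⟩ := hx
  subst hx0
  have hchild' : ∀ c : V, (T.Adj v c ∧ c ∈ descend T r v) ↔ (c = v₂ ∨ c = v₁) :=
    fun c => (hchild c).trans or_comm
  have hadj₁ : T.Adj v v₁ := ((hchild v₁).mpr (Or.inl rfl)).1
  have hmem₁ : v₁ ∈ descend T r v := ((hchild v₁).mpr (Or.inl rfl)).2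
  have hadj₂ : T.Adj v v₂ := ((hchild v₂).mpr (Or.inr rfl)).1
  have hmem₂ : v₂ ∈ descend T r v := ((hchild v₂).mpr (Or.inr rfl)).2
  obtain ⟨st₁, F1₁, F2₁, F3₁, F4₁⟩ :=
    far_package hT hw hd hne hchild hdisj hUconn hSU hiv le_rfl hA1 hC1
  obtain ⟨st₂, F1₂, F2₂, F3₂, F4₂⟩ :=
    far_package hT hw hd hne.symm hchild' hdisj hUconn hSU hiv le_rfl hA2 hC2
  set st : Fin k → V :=
    fun j => if j = iv v then v else if j ∈ Jset T r U v₁ then st₁ j else st₂ j with hst_def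
  have hstva : st (iv v) = v := if_pos rfl
  have hstv1 : ∀ j ∈ Jset T r U v₁, j ≠ iv v → st j = st₁ j := by
    intro j hj hja
    rw [hst_def]
    simp only [if_neg hja, if_pos hj]
  have hstv2 : ∀ j ∈ Jset T r U v₂, j ≠ iv v → st j = st₂ j := by
    intro j hj hja
    rw [hst_def]
    simp only [if_neg hja,
      if_neg (fun h => hja (J_not_both hT hne hchild hdisj hUconn hiv h hj))]
  have hsv : d (st (iv v)) v = 0 := by rw [hstva, d_self hd]
  have hcross₁ : ∀ u ∈ descend T r v₁, d (st (iv v)) u = 0 + d v u := by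
    intro u hu; rw [hstva, zero_add]
  have hcross₂ : ∀ u ∈ descend T r v₂, d (st (iv v)) u = 0 + d v u := by
    intro u hu; rw [hstva, zero_add]
  have Ht1s : ∀ t ∈ Jset T r U v₁, t ≠ iv v → 0 < d (st t) v := by
    intro t ht hta
    rw [hstv1 t ht hta]
    exact F4₁ t ht hta
  have Ht2s : ∀ t ∈ Jset T r U v₂, t ≠ iv v → 0 < d (st t) v := by
    intro t ht hta
    rw [hstv2 t ht hta]
    exact F4₂ t ht hta
  have Hoth₂ : ∀ t ∈ Jset T r U v, t ∉ Jset T r U v₂ → t ≠ iv v →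
      ∀ u ∈ descend T r v₂, 0 + d v u < d (st t) u := by
    intro t ht ht2 hta u hu
    have ht1 : t ∈ Jset T r U v₁ := by
      rcases J_cases hT hne hchild hdisj hiv ht with he | h1 | h2
      · exact absurd he hta
      · exact h1
      · exact absurd h2 ht2
    have heq : d (st t) u = d (st t) v + d v u := by
      conv_lhs => rw [hstv1 t ht1 hta]
      rw [← d_cross hT hd hne hchild (F1₁ t ht1 hta).2 hu, hstv1 t ht1 hta]
    have := Ht1s t ht1 hta
    linarith
  have Hoth₁ : ∀ t ∈ Jset T r U v, t ∉ Jset T r U v₁ → t ≠ iv v →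
      ∀ u ∈ descend T r v₁, 0 + d v u < d (st t) u := by
    intro t ht ht1 hta u hu
    have ht2 : t ∈ Jset T r U v₂ := by
      rcases J_cases hT hne hchild hdisj hiv ht with he | h1 | h2
      · exact absurd he hta
      · exact absurd h1 ht1
      · exact h2
    have heq : d (st t) u = d (st t) v + d v u := by
      conv_lhs => rw [hstv2 t ht2 hta]
      rw [← d_cross hT hd hne.symm hchild' (F1₂ t ht2 hta).2 hu, hstv2 t ht2 hta]
    have := Ht2s t ht2 hta
    linarith
  refine ⟨st, ?_, ?_, hsv.symm⟩
  · intro j hj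
    by_cases hja : j = iv v
    · rw [hja, hstva]
      exact ⟨hvS, descend_self v⟩
    · by_cases hj1 : j ∈ Jset T r U v₁
      · rw [hstv1 j hj1 hja]
        exact ⟨(F1₁ j hj1 hja).1, descend_mono hmem₁ (F1₁ j hj1 hja).2⟩
      · have hj2 : j ∈ Jset T r U v₂ := by
          rcases J_cases hT hne hchild hdisj hiv hj with he | h1 | h2
          · exact absurd he hja
          · exact absurd h1 hj1
          · exact h2
        rw [hstv2 j hj2 hja]
        exact ⟨(F1₂ j hj2 hja).1, descend_mono hmem₂ (F1₂ j hj2 hja).2⟩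
  · intro j hj
    rw [set_eq_iff_pointwise]
    intro u hu
    rcases children_cover hT hchild hu with heq | h | h
    · obtain rfl := heq.symm
      constructor
      · intro hfull
        by_cases hja : j = iv v
        · rw [hja]; exact hiv v
        · exfalso
          have h1 : d (st j) v ≤ 0 := by
            rw [← hsv]; exact hfull (iv v) (iv_mem_J hiv v)
          by_cases hj1 : j ∈ Jset T r U v₁
          · exact absurd h1 (not_le.mpr (Ht1s j hj1 hja))
          · have hj2 : j ∈ Jset T r U v₂ := by
              rcases J_cases hT hne hchild hdisj hiv hj with he | h1' | h2
              · exact absurd he hja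
              · exact absurd h1' hj1
              · exact h2
            exact absurd h1 (not_le.mpr (Ht2s j hj2 hja))
      · intro huU
        have hja : j = iv v := eq_iv hdisj hiv huU
        intro t ht
        rw [hja, hsv]
        exact d_nonneg hT hw hd _ _
    · exact far_pointwise hT hd hne.symm hchild' hdisj hUconn hiv hcross₁ hstv1 F2₁ F3₁
        Hoth₁ h hj
    · exact far_pointwise hT hd hne hchild hdisj hUconn hiv hcross₂ hstv2 F2₂ F3₂ Hoth₂ h hj

include hT hw hd hne hchild hdisj hUconn hSU hiv in
theorem main_recurrence :
    (iv v = iv v₁ ∧ iv v = iv v₂ →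
      Bset T r d U S iv v = chiSet T r w d U S iv v v₁ v₂ ∪
        ((Bshift T r w d U S iv v v₁ ∩ Ashift T r w d U S iv v v₂) ∪
         (Bshift T r w d U S iv v v₂ ∩ Ashift T r w d U S iv v v₁))) ∧
    (iv v = iv v₁ ∧ iv v ≠ iv v₂ →
      Bset T r d U S iv v = chiSet T r w d U S iv v v₁ v₂ ∪
        (Bshift T r w d U S iv v v₁ ∩ Cshift T r w d U S iv v v₂)) ∧
    (iv v = iv v₂ ∧ iv v ≠ iv v₁ →
      Bset T r d U S iv v = chiSet T r w d U S iv v v₁ v₂ ∪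
        (Bshift T r w d U S iv v v₂ ∩ Cshift T r w d U S iv v v₁)) ∧
    (iv v ≠ iv v₁ ∧ iv v ≠ iv v₂ →
      Bset T r d U S iv v = chiSet T r w d U S iv v v₁ v₂) := by
  have hchild' : ∀ c : V, (T.Adj v c ∧ c ∈ descend T r v) ↔ (c = v₂ ∨ c = v₁) :=
    fun c => (hchild c).trans or_comm
  refine ⟨?_, ?_, ?_, ?_⟩
  · rintro ⟨haa₁, haa₂⟩
    ext x
    constructor
    · intro hx
      rcases (Bset_loc hT hne hchild hiv).mp hx with hchi | hs1 | hs2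
      · exact Or.inl (chi_forward hT hw hd hne hchild hdisj hUconn hSU hiv hchi)
      · obtain ⟨-, hB, hA, -⟩ := side_forward hT hw hd hne hchild hdisj hUconn hSU hiv hs1
        exact Or.inr (Or.inl ⟨hB, hA haa₂⟩)
      · obtain ⟨-, hB, hA, -⟩ :=
          side_forward hT hw hd hne.symm hchild' hdisj hUconn hSU hiv hs2
        exact Or.inr (Or.inr ⟨hB, hA haa₁⟩)
    · rintro (hchi | ⟨hB, hA⟩ | ⟨hB, hA⟩)
      · exact chi_backward hT hw hd hne hchild hdisj hUconn hSU hiv hchi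
      · exact combine_side hT hw hd hne hchild hdisj hUconn hSU hiv haa₁ hB
          (fun _ => hA) (fun hn => absurd haa₂ hn)
      · exact combine_side hT hw hd hne.symm hchild' hdisj hUconn hSU hiv haa₂ hB
          (fun _ => hA) (fun hn => absurd haa₁ hn)
  · rintro ⟨haa₁, haa₂⟩
    ext x
    constructor
    · intro hx
      rcases (Bset_loc hT hne hchild hiv).mp hx with hchi | hs1 | hs2
      · exact Or.inl (chi_forward hT hw hd hne hchild hdisj hUconn hSU hiv hchi)
      · obtain ⟨-, hB, -, hC⟩ := side_forward hT hw hd hne hchild hdisj hUconn hSU hiv hs1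
        exact Or.inr ⟨hB, hC haa₂⟩
      · obtain ⟨haa, -, -, -⟩ :=
          side_forward hT hw hd hne.symm hchild' hdisj hUconn hSU hiv hs2
        exact absurd haa haa₂
    · rintro (hchi | ⟨hB, hC⟩)
      · exact chi_backward hT hw hd hne hchild hdisj hUconn hSU hiv hchi
      · exact combine_side hT hw hd hne hchild hdisj hUconn hSU hiv haa₁ hB
          (fun he => absurd he haa₂) (fun _ => hC)
  · rintro ⟨haa₂, haa₁⟩
    ext x
    constructor
    · intro hx
      rcases (Bset_loc hT hne hchild hiv).mp hx with hchi | hs1 | hs2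
      · exact Or.inl (chi_forward hT hw hd hne hchild hdisj hUconn hSU hiv hchi)
      · obtain ⟨haa, -, -, -⟩ := side_forward hT hw hd hne hchild hdisj hUconn hSU hiv hs1
        exact absurd haa haa₁
      · obtain ⟨-, hB, -, hC⟩ :=
          side_forward hT hw hd hne.symm hchild' hdisj hUconn hSU hiv hs2
        exact Or.inr ⟨hB, hC haa₁⟩
    · rintro (hchi | ⟨hB, hC⟩)
      · exact chi_backward hT hw hd hne hchild hdisj hUconn hSU hiv hchi
      · exact combine_side hT hw hd hne.symm hchild' hdisj hUconn hSU hiv haa₂ hB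
          (fun he => absurd he haa₁) (fun _ => hC)
  · rintro ⟨haa₁, haa₂⟩
    ext x
    constructor
    · intro hx
      rcases (Bset_loc hT hne hchild hiv).mp hx with hchi | hs1 | hs2
      · exact chi_forward hT hw hd hne hchild hdisj hUconn hSU hiv hchi
      · obtain ⟨haa, -, -, -⟩ := side_forward hT hw hd hne hchild hdisj hUconn hSU hiv hs1
        exact absurd haa haa₁
      · obtain ⟨haa, -, -, -⟩ :=
          side_forward hT hw hd hne.symm hchild' hdisj hUconn hSU hiv hs2
        exact absurd haa haa₂
    · intro hchi
      exact chi_backward hT hw hd hne hchild hdisj hUconn hSU hiv hchi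

end Dev

/-- The dynamic-programming recurrence for `B(v)` at a vertex `v` with two children
`v₁, v₂`, by cases on whether the cells of `v₁`, `v₂` agree with the cell of `v`. -/
theorem Bset_recurrence
    {V : Type*} [Fintype V] [DecidableEq V] (T : SimpleGraph V) (hT : T.IsTree)
    (w : Sym2 V → ℝ) (hw : ∀ e ∈ T.edgeSet, 0 < w e)
    (d : V → V → ℝ)
    (hd : ∀ (u v : V) (p : T.Walk u v), p.IsPath → (p.edges.map w).sum = d u v)
    (r : V) (hroot : ∃! u, T.Adj r u)
    (hdeg : ∀ u : V, ({c | T.Adj u c ∧ c ∈ descend T r u} : Set V).ncard ≤ 2)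
    (k : ℕ) (U S : Fin k → Set V)
    (hcover : (⋃ i, U i) = Set.univ)
    (hdisj : ∀ i j, i ≠ j → Disjoint (U i) (U j))
    (hUconn : ∀ i, (T.induce (U i)).Connected)
    (hSU : ∀ i, S i ⊆ U i)
    (iv : V → Fin k) (hiv : ∀ u, u ∈ U (iv u))
    (v v₁ v₂ : V) (hne : v₁ ≠ v₂)
    (hchild : ∀ c : V, (T.Adj v c ∧ c ∈ descend T r v) ↔ (c = v₁ ∨ c = v₂)) :
    (iv v = iv v₁ ∧ iv v = iv v₂ →
      Bset T r d U S iv v = chiSet T r w d U S iv v v₁ v₂ ∪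
        ((Bshift T r w d U S iv v v₁ ∩ Ashift T r w d U S iv v v₂) ∪
         (Bshift T r w d U S iv v v₂ ∩ Ashift T r w d U S iv v v₁))) ∧
    (iv v = iv v₁ ∧ iv v ≠ iv v₂ →
      Bset T r d U S iv v = chiSet T r w d U S iv v v₁ v₂ ∪
        (Bshift T r w d U S iv v v₁ ∩ Cshift T r w d U S iv v v₂)) ∧
    (iv v = iv v₂ ∧ iv v ≠ iv v₁ →
      Bset T r d U S iv v = chiSet T r w d U S iv v v₁ v₂ ∪
        (Bshift T r w d U S iv v v₂ ∩ Cshift T r w d U S iv v v₁)) ∧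
    (iv v ≠ iv v₁ ∧ iv v ≠ iv v₂ →
      Bset T r d U S iv v = chiSet T r w d U S iv v v₁ v₂) := by
  exact main_recurrence hT hw hd hne hchild hdisj hUconn hSU hiv
end
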